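/- arXiv:math/9903139 — 9 statements merged into one kernel-verified Lean document; each statement's English description precedes it below -/
import Mathlib

section
/- Let X be a Banach function space on a measure space (Ω,Σ,μ), let φ ∈ L∞(μ), and let M_φ : X → X be the multiplication operator f ↦ φf. If R : X → X is a bounded operator commuting with M_φ, then for every real α, R leaves invariant the band B = {f ∈ X : f = 0 a.e. on the complement of E^α}, where E^α = {ω ∈ Ω : φ(ω) ≤ α}. That is, if f ∈ X vanishes a.e. outside E^α, then Rf vanishes a.e. outside E^α. -/
open MeasureTheory

/-- If `X` is a Banach function space on `(Ω, Σ, μ)` (realized by a linear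
lattice embedding `ι` of `X` into the a.e.-equivalence classes of measurable functions,
with the ideal property), `M_φ` is the multiplication operator by an essentially bounded
measurable `φ`, and `R` is a bounded operator commuting with `M_φ`, then `R` leaves
invariant the band of functions supported in `E^α = {ω : φ ω ≤ α}`. -/
theorem multiplication_commutant_leaves_sublevel_band_invariant
    {Ω : Type*} [MeasurableSpace Ω] {μ : Measure Ω}
    {X : Type*} [NormedAddCommGroup X] [Lattice X] [HasSolidNorm X] [IsOrderedAddMonoid X] [NormedSpace ℝ X] [CompleteSpace X]
    (ι : X →ₗ[ℝ] (Ω →ₘ[μ] ℝ)) (hι_inj : Function.Injective ι)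
    (hι_mono : ∀ f g : X, f ≤ g ↔ ∀ᵐ ω ∂μ, (ι f : Ω → ℝ) ω ≤ (ι g : Ω → ℝ) ω)
    (hι_abs : ∀ f : X, (ι |f| : Ω → ℝ) =ᵐ[μ] fun ω => |(ι f : Ω → ℝ) ω|)
    (hideal : ∀ (f : X) (g : Ω →ₘ[μ] ℝ),
      (∀ᵐ ω ∂μ, |(g : Ω → ℝ) ω| ≤ |(ι f : Ω → ℝ) ω|) → ∃ h : X, ι h = g)
    (φ : Ω → ℝ) (hφ_meas : Measurable φ) (hφ_bdd : ∃ C : ℝ, ∀ ω, |φ ω| ≤ C)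
    (Mφ : X →L[ℝ] X)
    (hMφ : ∀ f : X, (ι (Mφ f) : Ω → ℝ) =ᵐ[μ] fun ω => φ ω * (ι f : Ω → ℝ) ω)
    (R : X →L[ℝ] X) (hcomm : R.comp Mφ = Mφ.comp R)
    (α : ℝ) (f : X)
    (hf : ∀ᵐ ω ∂μ, α < φ ω → (ι f : Ω → ℝ) ω = 0) :
    ∀ᵐ ω ∂μ, α < φ ω → (ι (R f) : Ω → ℝ) ω = 0 := by
  classical
  obtain ⟨C, hC⟩ := hφ_bdd
  -- A norm estimate from an a.e. pointwise estimate.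
  have key : ∀ (c : ℝ) (a b : X), 0 ≤ c →
      (∀ᵐ ω ∂μ, |(ι a : Ω → ℝ) ω| ≤ c * |(ι b : Ω → ℝ) ω|) → ‖a‖ ≤ c * ‖b‖ := by
    intro c a b hc hab
    have h1 : |a| ≤ c • |b| := by
      rw [hι_mono]
      have h2 := hι_abs a
      have h3 := hι_abs b
      have h4 : ((ι (c • |b|)) : Ω → ℝ) =ᵐ[μ] fun ω => c * (ι |b| : Ω → ℝ) ω := by
        rw [LinearMap.map_smul]
        filter_upwards [AEEqFun.coeFn_smul c (ι |b|)] with ω hω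
        simpa using hω
      filter_upwards [h2, h3, h4, hab] with ω e2 e3 e4 eab
      rw [e2, e4, e3]
      exact eab
    have hnn : (0 : X) ≤ c • |b| := by
      rw [hι_mono]
      have h4 : ((ι (c • |b|)) : Ω → ℝ) =ᵐ[μ] fun ω => c * (ι |b| : Ω → ℝ) ω := by
        rw [LinearMap.map_smul]
        filter_upwards [AEEqFun.coeFn_smul c (ι |b|)] with ω hω
        simpa using hω
      have h0 : ((ι (0 : X)) : Ω → ℝ) =ᵐ[μ] fun _ => (0 : ℝ) := by
        rw [map_zero]
        filter_upwards [AEEqFun.coeFn_zero (β := ℝ) (μ := μ)] with ω hω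
        simpa using hω
      filter_upwards [h4, h0, hι_abs b] with ω e4 e0 eb
      rw [e4, e0, eb]
      exact mul_nonneg hc (abs_nonneg _)
    have h5 : |(|a|)| ≤ abs (c • |b|) := by
      rw [abs_abs, abs_of_nonneg hnn]
      exact h1
    have := norm_le_norm_of_abs_le_abs h5
    rwa [norm_abs_eq_norm, norm_smul, norm_abs_eq_norm, Real.norm_of_nonneg hc] at this
  -- Polynomials of Mφ are multiplication operators commuting with R.
  have hpoly : ∀ p : Polynomial ℝ, ∃ T : X →L[ℝ] X,
      (∀ g : X, (ι (T g) : Ω → ℝ) =ᵐ[μ] fun ω => p.eval (φ ω) * (ι g : Ω → ℝ) ω) ∧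
      T.comp R = R.comp T := by
    intro p
    induction p using Polynomial.induction_on with
    | C a =>
        refine ⟨a • ContinuousLinearMap.id ℝ X, fun g => ?_, ?_⟩
        · rw [show (a • ContinuousLinearMap.id ℝ X) g = a • g from rfl, LinearMap.map_smul]
          filter_upwards [AEEqFun.coeFn_smul a (ι g)] with ω hω
          simpa [Polynomial.eval_C] using hω
        · ext x; simp
    | add p q hp hq =>
        obtain ⟨T1, hT1, hc1⟩ := hp
        obtain ⟨T2, hT2, hc2⟩ := hq
        refine ⟨T1 + T2, fun g => ?_, ?_⟩
        · have : ι ((T1 + T2) g) = ι (T1 g) + ι (T2 g) := by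
            rw [show (T1 + T2) g = T1 g + T2 g from rfl, map_add]
          rw [this]
          filter_upwards [AEEqFun.coeFn_add (ι (T1 g)) (ι (T2 g)), hT1 g, hT2 g]
            with ω h1 h2 h3
          simp [h1, h2, h3, Polynomial.eval_add, add_mul]
        · ext x
          simp only [ContinuousLinearMap.comp_apply, ContinuousLinearMap.add_apply]
          have e1 := congrFun (congrArg DFunLike.coe hc1) x
          have e2 := congrFun (congrArg DFunLike.coe hc2) x
          simp only [ContinuousLinearMap.comp_apply] at e1 e2
          rw [e1, e2, map_add]
    | monomial n a hp =>
        obtain ⟨T, hT, hc⟩ := hp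
        refine ⟨Mφ.comp T, fun g => ?_, ?_⟩
        · filter_upwards [hMφ (T g), hT g] with ω h1 h2
          simp only [ContinuousLinearMap.comp_apply]
          rw [h1, h2]
          simp only [Polynomial.eval_mul, Polynomial.eval_C, Polynomial.eval_pow,
            Polynomial.eval_X, pow_succ]
          ring
        · calc (Mφ.comp T).comp R = Mφ.comp (T.comp R) := by rw [ContinuousLinearMap.comp_assoc]
            _ = Mφ.comp (R.comp T) := by rw [hc]
            _ = (Mφ.comp R).comp T := by rw [ContinuousLinearMap.comp_assoc]
            _ = (R.comp Mφ).comp T := by rw [hcomm]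
            _ = R.comp (Mφ.comp T) := by rw [ContinuousLinearMap.comp_assoc]
  -- The cutoff function
  set ψ : ℝ → ℝ := fun t => min (max (t - α) 0) 1 with hψ
  have hψ_cont : Continuous ψ := by
    apply Continuous.min
    · exact (continuous_id.sub continuous_const).max continuous_const
    · exact continuous_const
  have hψ01 : ∀ t, 0 ≤ ψ t ∧ ψ t ≤ 1 := fun t =>
    ⟨le_min (le_max_right _ _) zero_le_one, min_le_right _ _⟩
  set g : Ω → ℝ := fun ω => ψ (φ ω) with hg
  have hg_meas : Measurable g := hψ_cont.measurable.comp hφ_meas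
  set G : Ω →ₘ[μ] ℝ :=
    (AEEqFun.mk g hg_meas.aestronglyMeasurable) * ι (R f) with hG
  have hG_coe : (G : Ω → ℝ) =ᵐ[μ] fun ω => g ω * (ι (R f) : Ω → ℝ) ω := by
    filter_upwards [AEEqFun.coeFn_mul (AEEqFun.mk g hg_meas.aestronglyMeasurable) (ι (R f)),
      AEEqFun.coeFn_mk g hg_meas.aestronglyMeasurable] with ω h1 h2
    rw [h1]; simp [h2]
  have hG_bdd : ∀ᵐ ω ∂μ, |(G : Ω → ℝ) ω| ≤ |(ι (R f) : Ω → ℝ) ω| := by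
    filter_upwards [hG_coe] with ω h1
    rw [h1, abs_mul]
    calc |g ω| * |(ι (R f) : Ω → ℝ) ω| ≤ 1 * |(ι (R f) : Ω → ℝ) ω| := by
          apply mul_le_mul_of_nonneg_right _ (abs_nonneg _)
          rw [abs_of_nonneg (hψ01 (φ ω)).1]; exact (hψ01 (φ ω)).2
      _ = _ := one_mul _
  obtain ⟨w, hw⟩ := hideal (R f) G hG_bdd
  -- g · ι f = 0 a.e.
  have hgf : ∀ᵐ ω ∂μ, g ω * (ι f : Ω → ℝ) ω = 0 := by
    filter_upwards [hf] with ω h1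
    rcases le_or_gt (φ ω) α with h | h
    · have : g ω = 0 := by
        simp only [hg, hψ]
        rw [max_eq_right (by linarith), min_eq_left zero_le_one]
      rw [this, zero_mul]
    · rw [h1 h, mul_zero]
  -- ‖w‖ is smaller than any positive multiple of a constant
  set K : ℝ := ‖R f‖ + ‖R‖ * ‖f‖ with hK
  have hK0 : 0 ≤ K := add_nonneg (norm_nonneg _) (mul_nonneg (norm_nonneg _) (norm_nonneg _))
  have hsmall : ∀ ε : ℝ, 0 < ε → ‖w‖ ≤ ε * K := by
    intro ε hε
    obtain ⟨p, hpε⟩ := exists_polynomial_near_of_continuousOn (-C) C ψ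
      (hψ_cont.continuousOn) ε hε
    obtain ⟨T, hT_eval, hT_comm⟩ := hpoly p
    have hφmem : ∀ ω, φ ω ∈ Set.Icc (-C) C := fun ω => by
      rcases abs_le.mp (hC ω) with ⟨h1, h2⟩; exact ⟨h1, h2⟩
    -- ‖T f‖ ≤ ε ‖f‖
    have h1 : ‖T f‖ ≤ ε * ‖f‖ := by
      apply key ε (T f) f hε.le
      filter_upwards [hT_eval f, hgf] with ω e1 e2
      rw [e1, abs_mul]
      rcases mul_eq_zero.mp e2 with h | h
      · apply mul_le_mul_of_nonneg_right _ (abs_nonneg _)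
        have hh := hpε (φ ω) (hφmem ω)
        have hzero : ψ (φ ω) = 0 := h
        rw [hzero, sub_zero] at hh
        exact hh.le
      · rw [h, abs_zero, mul_zero, mul_zero]
    -- ‖w - T (R f)‖ ≤ ε ‖R f‖
    have h2 : ‖w - T (R f)‖ ≤ ε * ‖R f‖ := by
      apply key ε _ (R f) hε.le
      have : ι (w - T (R f)) = G - ι (T (R f)) := by rw [map_sub, hw]
      rw [this]
      filter_upwards [AEEqFun.coeFn_sub G (ι (T (R f))), hG_coe, hT_eval (R f)]
        with ω e1 e2 e3
      simp only [e1, Pi.sub_apply, e2, e3]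
      rw [← sub_mul, abs_mul]
      apply mul_le_mul_of_nonneg_right _ (abs_nonneg _)
      have := hpε (φ ω) (hφmem ω)
      rw [abs_sub_comm] at this
      exact this.le
    have h3 : T (R f) = R (T f) := by
      have := congrFun (congrArg DFunLike.coe hT_comm) f
      simpa using this
    calc ‖w‖ = ‖(w - T (R f)) + T (R f)‖ := by rw [sub_add_cancel]
      _ ≤ ‖w - T (R f)‖ + ‖T (R f)‖ := norm_add_le _ _
      _ ≤ ε * ‖R f‖ + ‖R‖ * ‖T f‖ := by
          apply add_le_add h2
          rw [h3]; exact R.le_opNorm (T f)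
      _ ≤ ε * ‖R f‖ + ‖R‖ * (ε * ‖f‖) := by
          apply add_le_add_right
          exact mul_le_mul_of_nonneg_left h1 (norm_nonneg _)
      _ = ε * K := by rw [hK]; ring
  have hw0 : w = 0 := by
    rw [← norm_le_zero_iff]
    by_contra hcon
    push_neg at hcon
    have hwpos : 0 < ‖w‖ := hcon
    have := hsmall (‖w‖ / (2 * (K + 1))) (by positivity)
    have hle : ‖w‖ / (2 * (K + 1)) * K ≤ ‖w‖ / 2 := by
      rw [div_mul_eq_mul_div, div_le_div_iff₀ (by positivity) (by norm_num)]
      nlinarith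
    linarith
  have hG0 : G = 0 := by rw [← hw, hw0, map_zero]
  have : (fun ω => g ω * (ι (R f) : Ω → ℝ) ω) =ᵐ[μ] 0 := by
    filter_upwards [hG_coe, (AEEqFun.coeFn_zero (β := ℝ) (μ := μ))] with ω e1 e2
    rw [← e1, hG0, e2]
  filter_upwards [this] with ω h1 h2
  have hgpos : 0 < g ω := by
    simp only [hg, hψ]
    rw [max_eq_left (by linarith)]
    exact lt_min (by linarith) one_pos
  have := h1
  simp only [Pi.zero_apply] at this
  rcases mul_eq_zero.mp this with h | h
  · exact absurd h (ne_of_gt hgpos)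
  · exact h
end

section
/- Let X be a Banach function space on (Ω,Σ,μ), φ ∈ L∞(μ), and let R : X → X be a bounded operator commuting with M_φ. Then for all real α ≤ β, R leaves invariant the set E_α^β = {ω ∈ Ω : α ≤ φ(ω) ≤ β}, in the sense that if f ∈ X vanishes a.e. outside E_α^β, then so does Rf. -/
open MeasureTheory

/-- every bounded operator commuting with the multiplication operator `M_φ`
on a Banach function space leaves invariant each set `E_α^β = {ω : α ≤ φ ω ≤ β}`:
if `f` vanishes a.e. outside `E_α^β`, then so does `R f`. -/
theorem multiplication_commutant_leaves_level_band_invariant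
    {Ω : Type*} [MeasurableSpace Ω] {μ : Measure Ω}
    {X : Type*} [NormedAddCommGroup X] [Lattice X] [HasSolidNorm X] [IsOrderedAddMonoid X] [NormedSpace ℝ X] [CompleteSpace X]
    (ι : X →ₗ[ℝ] (Ω →ₘ[μ] ℝ)) (hι_inj : Function.Injective ι)
    (hι_mono : ∀ f g : X, f ≤ g ↔ ∀ᵐ ω ∂μ, (ι f : Ω → ℝ) ω ≤ (ι g : Ω → ℝ) ω)
    (hι_abs : ∀ f : X, (ι |f| : Ω → ℝ) =ᵐ[μ] fun ω => |(ι f : Ω → ℝ) ω|)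
    (hideal : ∀ (f : X) (g : Ω →ₘ[μ] ℝ),
      (∀ᵐ ω ∂μ, |(g : Ω → ℝ) ω| ≤ |(ι f : Ω → ℝ) ω|) → ∃ h : X, ι h = g)
    (φ : Ω → ℝ) (hφ_meas : Measurable φ) (hφ_bdd : ∃ C : ℝ, ∀ ω, |φ ω| ≤ C)
    (Mφ : X →L[ℝ] X)
    (hMφ : ∀ f : X, (ι (Mφ f) : Ω → ℝ) =ᵐ[μ] fun ω => φ ω * (ι f : Ω → ℝ) ω)
    (R : X →L[ℝ] X) (hcomm : R.comp Mφ = Mφ.comp R)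
    (α β : ℝ) (hαβ : α ≤ β) (f : X)
    (hf : ∀ᵐ ω ∂μ, ¬(α ≤ φ ω ∧ φ ω ≤ β) → (ι f : Ω → ℝ) ω = 0) :
    ∀ᵐ ω ∂μ, ¬(α ≤ φ ω ∧ φ ω ≤ β) → (ι (R f) : Ω → ℝ) ω = 0 := by
  classical
  set c : ℝ := (α + β) / 2 with hc
  set r : ℝ := (β - α) / 2 with hrdef
  have hr0 : 0 ≤ r := by rw [hrdef]; linarith
  set T : X →L[ℝ] X := Mφ - c • ContinuousLinearMap.id ℝ X with hT
  have hTf : ∀ g : X, T g = Mφ g - c • g := fun g => rfl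
  have hcomm' : ∀ g : X, R (Mφ g) = Mφ (R g) := by
    intro g
    have := congrArg (fun S : X →L[ℝ] X => S g) hcomm
    simpa using this
  have hTcomm : ∀ g : X, R (T g) = T (R g) := by
    intro g
    simp only [hTf, map_sub, _root_.map_smul, hcomm' g]
  have hTpowcomm : ∀ (n : ℕ) (g : X), R ((T ^ n) g) = (T ^ n) (R g) := by
    intro n
    induction n with
    | zero => intro g; simp
    | succ n ih =>
      intro g
      rw [pow_succ, ContinuousLinearMap.mul_apply, ih (T g), hTcomm,
        ContinuousLinearMap.mul_apply]
  -- image of T under ι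
  have hιT : ∀ g : X, (ι (T g) : Ω → ℝ) =ᵐ[μ]
      fun ω => (φ ω - c) * (ι g : Ω → ℝ) ω := by
    intro g
    have h1 : ι (T g) = ι (Mφ g) - c • ι g := by
      rw [hTf]; simp [map_sub, _root_.map_smul]
    rw [h1]
    filter_upwards [hMφ g, AEEqFun.coeFn_sub (ι (Mφ g)) (c • ι g),
      AEEqFun.coeFn_smul c (ι g)] with ω h2 h3 h4
    simp only [Pi.sub_apply] at h3
    rw [h3, h2, h4]
    simp only [Pi.smul_apply, smul_eq_mul]
    ring
  have hιTpow : ∀ (n : ℕ) (g : X), (ι ((T ^ n) g) : Ω → ℝ) =ᵐ[μ]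
      fun ω => (φ ω - c) ^ n * (ι g : Ω → ℝ) ω := by
    intro n
    induction n with
    | zero => intro g; simp
    | succ n ih =>
      intro g
      rw [pow_succ, ContinuousLinearMap.mul_apply]
      filter_upwards [ih (T g), hιT g] with ω h1 h2
      rw [h1, h2, pow_succ]
      ring
  -- upper bound
  have hup : ∀ n : ℕ, ‖(T ^ n) f‖ ≤ r ^ n * ‖f‖ := by
    intro n
    have e : ι ((r ^ n : ℝ) • |f|) = (r ^ n : ℝ) • ι |f| := _root_.map_smul ι _ _
    have hle : |(T ^ n) f| ≤ (r ^ n : ℝ) • |f| := by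
      rw [hι_mono, e]
      filter_upwards [hι_abs ((T ^ n) f), hι_abs f, hιTpow n f,
        AEEqFun.coeFn_smul ((r : ℝ) ^ n) (ι |f|), hf] with ω h1 h2 h3 h4 h5
      rw [h1, h3, h4]
      simp only [Pi.smul_apply, smul_eq_mul]
      rw [h2]
      by_cases hω : α ≤ φ ω ∧ φ ω ≤ β
      · obtain ⟨hω1, hω2⟩ := hω
        have hb : |φ ω - c| ≤ r := by
          rw [abs_le]
          constructor <;> (simp only [hc, hrdef]; linarith)
        calc |(φ ω - c) ^ n * (ι f : Ω → ℝ) ω|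
            = |φ ω - c| ^ n * |(ι f : Ω → ℝ) ω| := by
              rw [abs_mul, abs_pow]
          _ ≤ r ^ n * |(ι f : Ω → ℝ) ω| :=
              mul_le_mul_of_nonneg_right
                (pow_le_pow_left₀ (abs_nonneg _) hb n) (abs_nonneg _)
      · rw [h5 hω]; simp
    set b : X := (r ^ n : ℝ) • |f| with hb
    have hb0 : (0 : X) ≤ b := by
      rw [hι_mono]
      have e0 : ι b = (r ^ n : ℝ) • ι |f| := _root_.map_smul ι _ _
      filter_upwards [hι_abs f, AEEqFun.coeFn_smul ((r : ℝ) ^ n) (ι |f|),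
        AEEqFun.coeFn_zero (μ := μ) (β := ℝ)] with ω e1 e2 e3
      rw [map_zero ι, e3, e0, e2]
      simp only [Pi.smul_apply, smul_eq_mul, Pi.zero_apply]
      rw [e1]
      positivity
    have habs : |b| = b := abs_of_nonneg hb0
    have : ‖(T ^ n) f‖ ≤ ‖b‖ := by
      apply HasSolidNorm.solid
      rw [habs]
      exact hle
    calc ‖(T ^ n) f‖ ≤ ‖b‖ := this
      _ = r ^ n * ‖f‖ := by
          rw [hb, norm_smul, Real.norm_eq_abs, abs_of_nonneg (pow_nonneg hr0 n),
            norm_abs_eq_norm]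
  -- key step for each ε = 1/(k+1)
  have hkey : ∀ k : ℕ, ∀ᵐ ω ∂μ,
      r + 1 / (k + 1 : ℝ) ≤ |φ ω - c| → (ι (R f) : Ω → ℝ) ω = 0 := by
    intro k
    set ε : ℝ := 1 / (k + 1 : ℝ) with hε
    have hε0 : 0 < ε := by positivity
    set A : Set Ω := {ω | r + ε ≤ |φ ω - c|} with hA
    have hAmeas : MeasurableSet A := by
      have : Measurable fun ω => |φ ω - c| := (hφ_meas.sub measurable_const).abs
      exact measurableSet_le measurable_const this
    set gfun : Ω → ℝ := A.indicator (fun ω => (ι (R f) : Ω → ℝ) ω) with hgfun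
    have hgm : AEStronglyMeasurable gfun μ :=
      (ι (R f)).aestronglyMeasurable.indicator hAmeas
    set gae : Ω →ₘ[μ] ℝ := AEEqFun.mk gfun hgm with hgae
    have hgcoe : (gae : Ω → ℝ) =ᵐ[μ] gfun := AEEqFun.coeFn_mk gfun hgm
    have hdom : ∀ᵐ ω ∂μ, |(gae : Ω → ℝ) ω| ≤ |(ι (R f) : Ω → ℝ) ω| := by
      filter_upwards [hgcoe] with ω h1
      rw [h1, hgfun]
      by_cases hω : ω ∈ A
      · rw [Set.indicator_of_mem hω]
      · rw [Set.indicator_of_notMem hω]; simp [abs_nonneg]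
    obtain ⟨h, hh⟩ := hideal (R f) gae hdom
    -- lower bound
    have hlow : ∀ n : ℕ, (r + ε) ^ n * ‖h‖ ≤ ‖(T ^ n) (R f)‖ := by
      intro n
      have hle : |((r + ε) ^ n : ℝ) • h| ≤ |(T ^ n) (R f)| := by
        rw [hι_mono]
        have e : ι (((r + ε) ^ n : ℝ) • h) = ((r + ε) ^ n : ℝ) • ι h := _root_.map_smul ι _ _
        filter_upwards [hι_abs (((r + ε) ^ n : ℝ) • h), hι_abs ((T ^ n) (R f)),
          hιTpow n (R f), AEEqFun.coeFn_smul (((r + ε) : ℝ) ^ n) (ι h), hgcoe]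
          with ω h1 h2 h3 h4 h5
        rw [h1, h2, h3]
        have hcoe : (ι (((r + ε) ^ n : ℝ) • h) : Ω → ℝ) ω
            = (r + ε) ^ n * (ι h : Ω → ℝ) ω := by
          rw [e]
          simpa using h4
        rw [hcoe, hh, h5]
        by_cases hω : ω ∈ A
        · rw [hgfun, Set.indicator_of_mem hω]
          have hωA : r + ε ≤ |φ ω - c| := hω
          rw [abs_mul, abs_mul, abs_pow]
          refine mul_le_mul_of_nonneg_right ?_ (abs_nonneg _)
          rw [abs_pow, abs_of_nonneg (show (0:ℝ) ≤ r + ε by linarith)]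
          exact pow_le_pow_left₀ (by linarith) hωA n
        · rw [hgfun, Set.indicator_of_notMem hω]
          simp [abs_nonneg]
          positivity
      have := HasSolidNorm.solid hle
      rw [norm_smul, Real.norm_eq_abs, abs_of_nonneg (pow_nonneg (by linarith) n)]
        at this
      exact this
    -- combine
    have hcomb : ∀ n : ℕ, (r + ε) ^ n * ‖h‖ ≤ ‖R‖ * ‖f‖ * r ^ n := by
      intro n
      calc (r + ε) ^ n * ‖h‖ ≤ ‖(T ^ n) (R f)‖ := hlow n
        _ = ‖R ((T ^ n) f)‖ := by rw [hTpowcomm]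
        _ ≤ ‖R‖ * ‖(T ^ n) f‖ := R.le_opNorm _
        _ ≤ ‖R‖ * (r ^ n * ‖f‖) := by
            gcongr
            exact hup n
        _ = ‖R‖ * ‖f‖ * r ^ n := by ring
    have hrε : 0 < r + ε := by linarith
    have hq : r / (r + ε) < 1 := (div_lt_one hrε).2 (by linarith)
    have hq0 : 0 ≤ r / (r + ε) := div_nonneg hr0 hrε.le
    have hbnd : ∀ n : ℕ, ‖h‖ ≤ ‖R‖ * ‖f‖ * (r / (r + ε)) ^ n := by
      intro n
      have hp : (0:ℝ) < (r + ε) ^ n := pow_pos hrε n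
      rw [div_pow, ← mul_div_assoc, le_div_iff₀ hp, mul_comm ‖h‖]
      exact hcomb n
    have htend : Filter.Tendsto (fun n : ℕ => ‖R‖ * ‖f‖ * (r / (r + ε)) ^ n)
        Filter.atTop (nhds 0) := by
      have := tendsto_pow_atTop_nhds_zero_of_lt_one hq0 hq
      simpa using this.const_mul (‖R‖ * ‖f‖)
    have hnorm0 : ‖h‖ ≤ 0 :=
      ge_of_tendsto htend (Filter.Eventually.of_forall hbnd)
    have hh0 : h = 0 := norm_le_zero_iff.mp hnorm0
    have hgae0 : gae = 0 := by rw [← hh, hh0, map_zero]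
    have : ∀ᵐ ω ∂μ, gfun ω = 0 := by
      have h0 : (gae : Ω → ℝ) =ᵐ[μ] 0 := by rw [hgae0]; exact AEEqFun.coeFn_zero
      filter_upwards [hgcoe, h0] with ω h1 h2
      rw [← h1, h2]; rfl
    filter_upwards [this] with ω hω hωA
    have : ω ∈ A := hωA
    rw [hgfun, Set.indicator_of_mem this] at hω
    exact hω
  rw [← ae_all_iff] at hkey
  filter_upwards [hkey] with ω hall hω
  have hgt : r < |φ ω - c| := by
    rcases not_and_or.mp hω with h' | h'
    · push_neg at h'
      rw [lt_abs]
      right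
      simp only [hc, hrdef]
      linarith
    · push_neg at h'
      rw [lt_abs]
      left
      simp only [hc, hrdef]
      linarith
  obtain ⟨k, hk⟩ := exists_nat_one_div_lt (by linarith : (0:ℝ) < |φ ω - c| - r)
  exact hall k (by push_cast at hk ⊢; linarith)
end

section
/- Let X be a Banach function space on (Ω,Σ,μ) and φ ∈ L∞(μ), φ ≥ 0. If R : X → X is a bounded operator with RM_φ = M_φR, x ∈ X is supported in E^1 = {ω : φ(ω) ≤ 1}, and γ > 1, then the set B = {ω ∈ Ω : Rx(ω) ≠ 0 and φ(ω) > γ} has measure zero. -/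
open MeasureTheory

/-- if `R` commutes with `M_φ` (`φ ≥ 0` essentially bounded), `x` is
supported in `E^1 = {ω : φ ω ≤ 1}` and `γ > 1`, then
`B = {ω : (Rx)(ω) ≠ 0 and φ(ω) > γ}` is null. -/
theorem commutant_support_escape_null
    {Ω : Type*} [MeasurableSpace Ω] {μ : Measure Ω}
    {X : Type*} [NormedAddCommGroup X] [Lattice X] [IsOrderedAddMonoid X] [HasSolidNorm X] [NormedSpace ℝ X] [CompleteSpace X]
    (ι : X →ₗ[ℝ] (Ω →ₘ[μ] ℝ)) (hι_inj : Function.Injective ι)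
    (hι_mono : ∀ f g : X, f ≤ g ↔ ∀ᵐ ω ∂μ, (ι f : Ω → ℝ) ω ≤ (ι g : Ω → ℝ) ω)
    (hι_abs : ∀ f : X, (ι |f| : Ω → ℝ) =ᵐ[μ] fun ω => |(ι f : Ω → ℝ) ω|)
    (hideal : ∀ (f : X) (g : Ω →ₘ[μ] ℝ),
      (∀ᵐ ω ∂μ, |(g : Ω → ℝ) ω| ≤ |(ι f : Ω → ℝ) ω|) → ∃ h : X, ι h = g)
    (φ : Ω → ℝ) (hφ_meas : Measurable φ) (hφ_bdd : ∃ C : ℝ, ∀ ω, |φ ω| ≤ C)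
    (Mφ : X →L[ℝ] X)
    (hMφ : ∀ f : X, (ι (Mφ f) : Ω → ℝ) =ᵐ[μ] fun ω => φ ω * (ι f : Ω → ℝ) ω)
    (hφ_pos : ∀ ω, 0 ≤ φ ω)
    (R : X →L[ℝ] X) (hcomm : R.comp Mφ = Mφ.comp R)
    (x : X) (hx : ∀ᵐ ω ∂μ, (1 : ℝ) < φ ω → (ι x : Ω → ℝ) ω = 0)
    (γ : ℝ) (hγ : 1 < γ) :
    μ {ω | (ι (R x) : Ω → ℝ) ω ≠ 0 ∧ γ < φ ω} = 0 := by
  classical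
  -- norm comparison from a.e. pointwise comparison
  have le_of_ae : ∀ a b : X, (∀ᵐ ω ∂μ, |(ι a : Ω → ℝ) ω| ≤ |(ι b : Ω → ℝ) ω|) →
      ‖a‖ ≤ ‖b‖ := by
    intro a b hab
    refine norm_le_norm_of_abs_le_abs ((hι_mono _ _).2 ?_)
    filter_upwards [hι_abs a, hι_abs b, hab] with ω h1 h2 h3
    rw [h1, h2]; exact h3
  -- power identity
  have hpow : ∀ (n : ℕ) (y : X),
      (ι ((Mφ ^ n) y) : Ω → ℝ) =ᵐ[μ] fun ω => (φ ω) ^ n * (ι y : Ω → ℝ) ω := by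
    intro n
    induction n with
    | zero => intro y; simp
    | succ n ih =>
      intro y
      have h1 : (Mφ ^ (n + 1)) y = Mφ ((Mφ ^ n) y) := by
        rw [pow_succ']; rfl
      rw [h1]
      filter_upwards [hMφ ((Mφ ^ n) y), ih y] with ω hω1 hω2
      rw [hω1, hω2, pow_succ']; ring
  -- commutation with powers
  have hcomm' : ∀ n : ℕ, R ((Mφ ^ n) x) = (Mφ ^ n) (R x) := by
    intro n
    have hc : Commute R Mφ := hcomm
    have := (hc.pow_right n)
    calc R ((Mφ ^ n) x) = (R * Mφ ^ n) x := rfl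
      _ = (Mφ ^ n * R) x := by rw [this]
      _ = (Mφ ^ n) (R x) := rfl
  -- uniform bound ‖Mφ^n x‖ ≤ ‖x‖
  have hbound : ∀ n : ℕ, ‖(Mφ ^ n) x‖ ≤ ‖x‖ := by
    intro n
    refine le_of_ae _ _ ?_
    filter_upwards [hpow n x, hx] with ω h1 h2
    rw [h1]
    by_cases hφ1 : 1 < φ ω
    · simp [h2 hφ1]
    · push_neg at hφ1
      rw [abs_mul]
      have : |(φ ω) ^ n| ≤ 1 := by
        rw [abs_pow, abs_of_nonneg (hφ_pos ω)]
        exact pow_le_one₀ (hφ_pos ω) hφ1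
      nlinarith [abs_nonneg ((ι x : Ω → ℝ) ω), abs_nonneg ((φ ω) ^ n)]
  -- the truncated function
  set f : Ω → ℝ := (ι (R x) : Ω → ℝ) with hf
  set S : Set Ω := {ω | γ < φ ω} with hSdef
  have hS_meas : MeasurableSet S := measurableSet_lt measurable_const hφ_meas
  have hgmeas : AEStronglyMeasurable (S.indicator f) μ :=
    (ι (R x)).aestronglyMeasurable.indicator hS_meas
  set g : Ω →ₘ[μ] ℝ := AEEqFun.mk (S.indicator f) hgmeas with hgdef
  have hg_coe : (g : Ω → ℝ) =ᵐ[μ] S.indicator f := AEEqFun.coeFn_mk _ _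
  obtain ⟨h, hh⟩ := hideal (R x) g (by
    filter_upwards [hg_coe] with ω hω
    rw [hω]
    by_cases hmem : ω ∈ S
    · rw [Set.indicator_of_mem hmem]
    · rw [Set.indicator_of_notMem hmem]; simp [abs_nonneg])
  -- lower bound : γ^n ‖h‖ ≤ ‖Mφ^n (R x)‖
  have hγ0 : (0:ℝ) < γ := lt_trans one_pos hγ
  have hlower : ∀ n : ℕ, γ ^ n * ‖h‖ ≤ ‖R‖ * ‖x‖ := by
    intro n
    have hsmul : ‖γ ^ n • h‖ ≤ ‖(Mφ ^ n) (R x)‖ := by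
      refine le_of_ae _ _ ?_
      have hcoe : (ι (γ ^ n • h) : Ω → ℝ) =ᵐ[μ] fun ω => γ ^ n * (ι h : Ω → ℝ) ω := by
        rw [LinearMap.map_smul]
        exact AEEqFun.coeFn_smul _ _
      filter_upwards [hcoe, hpow n (R x), hh ▸ hg_coe] with ω h1 h2 h3
      rw [h1, h2, abs_mul, abs_mul, h3]
      by_cases hmem : ω ∈ S
      · rw [Set.indicator_of_mem hmem]
        have hγφ : γ < φ ω := hmem
        have : |γ ^ n| ≤ |(φ ω) ^ n| := by
          rw [abs_pow, abs_pow, abs_of_pos hγ0, abs_of_nonneg (hφ_pos ω)]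
          exact pow_le_pow_left₀ (le_of_lt hγ0) (le_of_lt hγφ) n
        exact mul_le_mul_of_nonneg_right this (abs_nonneg _)
      · rw [Set.indicator_of_notMem hmem]
        simp only [abs_zero, mul_zero]
        positivity
    have hup : ‖(Mφ ^ n) (R x)‖ ≤ ‖R‖ * ‖x‖ := by
      rw [← hcomm' n]
      calc ‖R ((Mφ ^ n) x)‖ ≤ ‖R‖ * ‖(Mφ ^ n) x‖ := R.le_opNorm _
        _ ≤ ‖R‖ * ‖x‖ := mul_le_mul_of_nonneg_left (hbound n) (norm_nonneg R)
    calc γ ^ n * ‖h‖ = ‖γ ^ n • h‖ := by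
          rw [norm_smul, Real.norm_eq_abs, abs_pow, abs_of_pos hγ0]
      _ ≤ ‖R‖ * ‖x‖ := hsmul.trans hup
  -- hence h = 0
  have hh0 : h = 0 := by
    by_contra hne
    have hpos : 0 < ‖h‖ := norm_pos_iff.2 hne
    obtain ⟨n, hn⟩ := pow_unbounded_of_one_lt (‖R‖ * ‖x‖ / ‖h‖) hγ
    have : ‖R‖ * ‖x‖ < γ ^ n * ‖h‖ := by
      rw [div_lt_iff₀ hpos] at hn; linarith
    exact absurd (hlower n) (not_le.2 this)
  have hgzero : (S.indicator f) =ᵐ[μ] 0 := by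
    have : (ι h : Ω → ℝ) =ᵐ[μ] 0 := by rw [hh0, map_zero]; exact AEEqFun.coeFn_zero
    exact (hh ▸ hg_coe).symm.trans this
  have hae : ∀ᵐ ω ∂μ, ¬(f ω ≠ 0 ∧ γ < φ ω) := by
    filter_upwards [hgzero] with ω hω
    rintro ⟨hne, hγφ⟩
    have : S.indicator f ω = f ω := Set.indicator_of_mem (show ω ∈ S from hγφ) f
    rw [hω] at this
    exact hne this.symm
  rw [ae_iff] at hae
  simpa [not_not] using hae
end

section
/- If φ ∈ L∞(μ) is not a.e. equal to a constant, then the multiplication operator M_φ on a Banach function space X has a non-trivial hyperinvariant band: there is a measurable set E with both E and its complement of positive measure such that every bounded operator commuting with M_φ leaves the band B_E = {f ∈ X : f = 0 a.e. outside E} invariant. -/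
open MeasureTheory

/-- Weierstrass step: a polynomial close to 1 on `[-C, α]` and close to 0 on `[β, C]`. -/
lemma aux_poly_step (C α β ε : ℝ) (hαβ : α < β) (hε : 0 < ε) :
    ∃ p : Polynomial ℝ,
      (∀ t, |t| ≤ C → t ≤ α → |p.eval t - 1| ≤ ε) ∧
      (∀ t, |t| ≤ C → β ≤ t → |p.eval t| ≤ ε) := by
  set u : ℝ → ℝ := fun t => min 1 (max 0 ((β - t) / (β - α))) with hu
  have hcont : ContinuousOn u (Set.Icc (-C) C) := by
    apply Continuous.continuousOn
    apply continuous_const.min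
    apply continuous_const.max
    exact (continuous_const.sub continuous_id).div_const _
  obtain ⟨p, hp⟩ := exists_polynomial_near_of_continuousOn (-C) C u hcont ε hε
  have hβα : (0:ℝ) < β - α := by linarith
  refine ⟨p, ?_, ?_⟩
  · intro t ht htα
    have hmem : t ∈ Set.Icc (-C) C := Set.mem_Icc.mpr (abs_le.mp ht)
    have h1 : u t = 1 := by
      have h2 : (1:ℝ) ≤ (β - t) / (β - α) := (one_le_div hβα).mpr (by linarith)
      simp only [hu]
      rw [max_eq_right (le_trans zero_le_one h2), min_eq_left h2]
    have := hp t hmem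
    rw [h1] at this
    exact le_of_lt this
  · intro t ht hβt
    have hmem : t ∈ Set.Icc (-C) C := Set.mem_Icc.mpr (abs_le.mp ht)
    have h1 : u t = 0 := by
      have h2 : (β - t) / (β - α) ≤ 0 := div_nonpos_iff.mpr (Or.inr ⟨by linarith, by linarith⟩)
      simp only [hu]
      rw [max_eq_left h2, min_eq_right zero_le_one]
    have := hp t hmem
    rw [h1] at this
    simpa using le_of_lt this

/-- if the essentially bounded multiplier `φ` is not a.e. constant, then
`M_φ` has a non-trivial hyperinvariant band `B_E`: there is a measurable `E` with both
`E` and its complement of positive measure such that every bounded operator commuting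
with `M_φ` maps functions supported a.e. in `E` to functions supported a.e. in `E`. -/
theorem multiplication_operator_has_hyperinvariant_band
    {Ω : Type*} [MeasurableSpace Ω] {μ : Measure Ω}
    {X : Type*} [NormedAddCommGroup X] [Lattice X] [HasSolidNorm X] [IsOrderedAddMonoid X] [NormedSpace ℝ X] [CompleteSpace X]
    (ι : X →ₗ[ℝ] (Ω →ₘ[μ] ℝ)) (hι_inj : Function.Injective ι)
    (hι_mono : ∀ f g : X, f ≤ g ↔ ∀ᵐ ω ∂μ, (ι f : Ω → ℝ) ω ≤ (ι g : Ω → ℝ) ω)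
    (hι_abs : ∀ f : X, (ι |f| : Ω → ℝ) =ᵐ[μ] fun ω => |(ι f : Ω → ℝ) ω|)
    (hideal : ∀ (f : X) (g : Ω →ₘ[μ] ℝ),
      (∀ᵐ ω ∂μ, |(g : Ω → ℝ) ω| ≤ |(ι f : Ω → ℝ) ω|) → ∃ h : X, ι h = g)
    (φ : Ω → ℝ) (hφ_meas : Measurable φ) (hφ_bdd : ∃ C : ℝ, ∀ ω, |φ ω| ≤ C)
    (Mφ : X →L[ℝ] X)
    (hMφ : ∀ f : X, (ι (Mφ f) : Ω → ℝ) =ᵐ[μ] fun ω => φ ω * (ι f : Ω → ℝ) ω)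
    (hφ_nonconst : ¬ ∃ c : ℝ, φ =ᵐ[μ] fun _ => c) :
    ∃ E : Set Ω, MeasurableSet E ∧ 0 < μ E ∧ 0 < μ Eᶜ ∧
      ∀ R : X →L[ℝ] X, R.comp Mφ = Mφ.comp R →
        ∀ f : X, (∀ᵐ ω ∂μ, ω ∉ E → (ι f : Ω → ℝ) ω = 0) →
          (∀ᵐ ω ∂μ, ω ∉ E → (ι (R f) : Ω → ℝ) ω = 0) := by
  classical
  obtain ⟨C₀, hC₀⟩ := hφ_bdd
  set C : ℝ := max C₀ 0 with hCdef
  have hC : ∀ ω, |φ ω| ≤ C := fun ω => le_trans (hC₀ ω) (le_max_left _ _)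
  have hμ : μ ≠ 0 := by
    rintro rfl
    exact hφ_nonconst ⟨0, by simp [Filter.EventuallyEq, ae_zero]⟩
  -- find a level α with both level sets of positive measure
  have hex : ∃ α : ℝ, 0 < μ {ω | φ ω ≤ α} ∧ 0 < μ {ω | α < φ ω} := by
    by_contra hno
    push_neg at hno
    have hno' : ∀ α : ℝ, 0 < μ {ω | φ ω ≤ α} → μ {ω | α < φ ω} = 0 :=
      fun α h => le_antisymm (hno α h) zero_le
    set T : Set ℝ := {α | 0 < μ {ω | φ ω ≤ α}} with hT
    have hCT : C ∈ T := by
      have huniv : {ω | φ ω ≤ C} = Set.univ :=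
        Set.eq_univ_of_forall fun ω => (abs_le.mp (hC ω)).2
      simp only [hT, Set.mem_setOf_eq, huniv]
      exact Measure.measure_univ_pos.mpr hμ
    have hbdd : BddBelow T := by
      refine ⟨-C, fun α hα => ?_⟩
      by_contra hlt
      push_neg at hlt
      have hempty : {ω | φ ω ≤ α} = ∅ := by
        ext ω
        simp only [Set.mem_setOf_eq, Set.mem_empty_iff_false, iff_false, not_le]
        exact lt_of_lt_of_le hlt ((abs_le.mp (hC ω)).1)
      rw [hT, Set.mem_setOf_eq, hempty] at hα
      simp at hα
    set c := sInf T with hc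
    have hle : ∀ᵐ ω ∂μ, φ ω ≤ c := by
      have hnull : ∀ n : ℕ, μ {ω | c + 1/(n+1) < φ ω} = 0 := by
        intro n
        have hδ : (0:ℝ) < 1/(n+1) := by positivity
        have hlt : sInf T < c + 1/(n+1) := by rw [← hc]; linarith
        obtain ⟨a, haT, halt⟩ := exists_lt_of_csInf_lt ⟨C, hCT⟩ hlt
        refine measure_mono_null ?_ (hno' a haT)
        intro ω hω
        simp only [Set.mem_setOf_eq] at hω ⊢
        linarith
      have hsub : {ω | ¬ φ ω ≤ c} ⊆ ⋃ n : ℕ, {ω | c + 1/(n+1) < φ ω} := by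
        intro ω hω
        rw [Set.mem_setOf_eq, not_le] at hω
        obtain ⟨n, hn⟩ := exists_nat_one_div_lt (sub_pos.mpr hω)
        exact Set.mem_iUnion.mpr ⟨n, by simp only [Set.mem_setOf_eq]; linarith⟩
      exact ae_iff.mpr (measure_mono_null hsub (measure_iUnion_null hnull))
    have hge : ∀ᵐ ω ∂μ, c ≤ φ ω := by
      have hnull : ∀ n : ℕ, μ {ω | φ ω ≤ c - 1/(n+1)} = 0 := by
        intro n
        have hδ : (0:ℝ) < 1/(n+1) := by positivity
        by_contra h0
        have hmem : c - 1/(n+1) ∈ T := by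
          rw [hT, Set.mem_setOf_eq]
          exact pos_iff_ne_zero.mpr h0
        have := csInf_le hbdd hmem
        rw [← hc] at this
        linarith
      have hsub : {ω | ¬ c ≤ φ ω} ⊆ ⋃ n : ℕ, {ω | φ ω ≤ c - 1/(n+1)} := by
        intro ω hω
        rw [Set.mem_setOf_eq, not_le] at hω
        obtain ⟨n, hn⟩ := exists_nat_one_div_lt (sub_pos.mpr hω)
        exact Set.mem_iUnion.mpr ⟨n, by simp only [Set.mem_setOf_eq]; linarith⟩
      exact ae_iff.mpr (measure_mono_null hsub (measure_iUnion_null hnull))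
    exact hφ_nonconst ⟨c, by
      filter_upwards [hle, hge] with ω h1 h2
      exact le_antisymm h1 h2⟩
  obtain ⟨α, hEpos, hEcpos⟩ := hex
  refine ⟨{ω | φ ω ≤ α}, measurableSet_le hφ_meas measurable_const, hEpos, ?_, ?_⟩
  · have hcompl : {ω | φ ω ≤ α}ᶜ = {ω | α < φ ω} := by
      ext ω; simp [not_le]
    rw [hcompl]; exact hEcpos
  intro R hR f hf
  set g := R f with hg
  -- monotone-norm helper
  have key : ∀ h k : X, (∀ᵐ ω ∂μ, |(ι h : Ω → ℝ) ω| ≤ |(ι k : Ω → ℝ) ω|) → ‖h‖ ≤ ‖k‖ := by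
    intro h k hhk
    refine norm_le_norm_of_abs_le_abs ((hι_mono _ _).mpr ?_)
    filter_upwards [hι_abs h, hι_abs k, hhk] with ω e1 e2 e3
    rw [e1, e2]; exact e3
  -- polynomial functional calculus acts as multiplication by `p ∘ φ`
  have hpoly : ∀ (p : Polynomial ℝ) (u : X),
      ((ι ((Polynomial.aeval Mφ p) u) : Ω → ℝ))
        =ᵐ[μ] fun ω => Polynomial.eval (φ ω) p * (ι u : Ω → ℝ) ω := by
    intro p
    induction p using Polynomial.induction_on with
    | C a =>
      intro u
      have h1 : (Polynomial.aeval Mφ) (Polynomial.C a) = a • (1 : X →L[ℝ] X) := by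
        rw [Polynomial.aeval_C]; exact Algebra.algebraMap_eq_smul_one a
      rw [h1]
      simp only [ContinuousLinearMap.smul_apply, ContinuousLinearMap.one_apply]
      rw [ι.map_smul]
      filter_upwards [AEEqFun.coeFn_smul a (ι u)] with ω hω
      rw [hω]
      simp [Polynomial.eval_C, smul_eq_mul]
    | add p q hp hq =>
      intro u
      rw [map_add]
      simp only [ContinuousLinearMap.add_apply]
      rw [map_add]
      filter_upwards [AEEqFun.coeFn_add (ι ((Polynomial.aeval Mφ) p u))
        (ι ((Polynomial.aeval Mφ) q u)), hp u, hq u] with ω h1 h2 h3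
      rw [h1]
      simp only [Pi.add_apply]
      rw [h2, h3, Polynomial.eval_add]
      ring
    | monomial n a hp =>
      intro u
      have h1 : Polynomial.C a * Polynomial.X ^ (n+1)
          = (Polynomial.C a * Polynomial.X ^ n) * Polynomial.X := by ring
      rw [h1, map_mul, Polynomial.aeval_X]
      simp only [ContinuousLinearMap.mul_apply]
      filter_upwards [hp (Mφ u), hMφ u] with ω h2 h3
      rw [h2, h3]
      simp only [Polynomial.eval_mul, Polynomial.eval_pow, Polynomial.eval_X,
        Polynomial.eval_C, pow_succ]
      ring
  -- R commutes with the polynomial calculus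
  have hRM : ∀ x : X, R (Mφ x) = Mφ (R x) := fun x => ContinuousLinearMap.ext_iff.mp hR x
  have hcommP : ∀ (p : Polynomial ℝ) (v : X),
      R ((Polynomial.aeval Mφ p) v) = (Polynomial.aeval Mφ p) (R v) := by
    intro p
    induction p using Polynomial.induction_on with
    | C a =>
      intro v
      rw [Polynomial.aeval_C, Algebra.algebraMap_eq_smul_one]
      simp
    | add p q hp hq =>
      intro v
      rw [map_add]
      simp only [ContinuousLinearMap.add_apply, map_add]
      rw [hp v, hq v]
    | monomial n a hp =>
      intro v
      have h1 : Polynomial.C a * Polynomial.X ^ (n+1)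
          = Polynomial.X * (Polynomial.C a * Polynomial.X ^ n) := by ring
      rw [h1, map_mul, Polynomial.aeval_X]
      simp only [ContinuousLinearMap.mul_apply]
      rw [hRM, hp v]
  -- core claim: ι g vanishes a.e. on each strict upper level set
  have main : ∀ β : ℝ, α < β → ∀ᵐ ω ∂μ, β ≤ φ ω → (ι g : Ω → ℝ) ω = 0 := by
    intro β hβ
    have hF : MeasurableSet {ω | β ≤ φ ω} := measurableSet_le measurable_const hφ_meas
    set F := {ω | β ≤ φ ω} with hFdef
    set w : Ω → ℝ := F.indicator (fun ω => (ι g : Ω → ℝ) ω) with hwdef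
    have hw_meas : AEStronglyMeasurable w μ := (ι g).aestronglyMeasurable.indicator hF
    set W : Ω →ₘ[μ] ℝ := AEEqFun.mk w hw_meas with hWdef
    have hWcoe : (W : Ω → ℝ) =ᵐ[μ] w := AEEqFun.coeFn_mk w hw_meas
    obtain ⟨gF, hgF⟩ : ∃ h : X, ι h = W := by
      apply hideal g
      filter_upwards [hWcoe] with ω hω
      rw [hω, hwdef]
      by_cases hmem : ω ∈ F
      · rw [Set.indicator_of_mem hmem]
      · rw [Set.indicator_of_notMem hmem]; simp
    have hKey : ∀ ε : ℝ, 0 < ε → ‖gF‖ ≤ ε * (‖g‖ + ‖R‖ * ‖f‖) := by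
      intro ε hε
      obtain ⟨p, hp1, hp2⟩ := aux_poly_step C α β ε hβ hε
      set T := Polynomial.aeval Mφ p with hTdef
      have hTf : ‖T f - f‖ ≤ ε * ‖f‖ := by
        have hb : ‖T f - f‖ ≤ ‖ε • f‖ := by
          apply key
          have e1 : ι (T f - f) = ι (T f) - ι f := map_sub ι _ _
          have e2 : ι (ε • f) = ε • ι f := ι.map_smul ε f
          rw [e1, e2]
          filter_upwards [AEEqFun.coeFn_sub (ι (T f)) (ι f),
            AEEqFun.coeFn_smul ε (ι f), hpoly p f, hf] with ω h1 h2 h3 h4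
          rw [h1, h2]
          simp only [Pi.sub_apply, Pi.smul_apply, smul_eq_mul]
          rw [h3]
          by_cases hzero : (ι f : Ω → ℝ) ω = 0
          · rw [hzero]; simp
          · have hE : φ ω ≤ α := by
              by_contra hc
              exact hzero (h4 hc)
            have hest := hp1 (φ ω) (hC ω) hE
            calc |Polynomial.eval (φ ω) p * (ι f : Ω → ℝ) ω - (ι f : Ω → ℝ) ω|
                = |Polynomial.eval (φ ω) p - 1| * |(ι f : Ω → ℝ) ω| := by
                  rw [← abs_mul]; ring_nf
              _ ≤ ε * |(ι f : Ω → ℝ) ω| :=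
                  mul_le_mul_of_nonneg_right hest (abs_nonneg _)
              _ = |ε * (ι f : Ω → ℝ) ω| := by
                  rw [abs_mul, abs_of_pos hε]
        calc ‖T f - f‖ ≤ ‖ε • f‖ := hb
          _ = ε * ‖f‖ := by rw [norm_smul, Real.norm_eq_abs, abs_of_pos hε]
      have hTg_norm : ‖T g - g‖ ≤ ‖R‖ * (ε * ‖f‖) := by
        have hTg : T g - g = R (T f - f) := by
          rw [map_sub, hg, ← hcommP p f]
        rw [hTg]
        exact (R.le_opNorm _).trans (mul_le_mul_of_nonneg_left hTf (norm_nonneg R))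
      set w2 : Ω → ℝ := F.indicator (fun ω => (ι (T g) : Ω → ℝ) ω) with hw2def
      have hw2m : AEStronglyMeasurable w2 μ := (ι (T g)).aestronglyMeasurable.indicator hF
      obtain ⟨A, hA⟩ : ∃ h : X, ι h = AEEqFun.mk w2 hw2m := by
        apply hideal (T g)
        filter_upwards [AEEqFun.coeFn_mk w2 hw2m] with ω hω
        rw [hω, hw2def]
        by_cases hmem : ω ∈ F
        · rw [Set.indicator_of_mem hmem]
        · rw [Set.indicator_of_notMem hmem]; simp
      have hAnorm : ‖A‖ ≤ ε * ‖g‖ := by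
        have hb : ‖A‖ ≤ ‖ε • g‖ := by
          apply key
          have e2 : ι (ε • g) = ε • ι g := ι.map_smul ε g
          rw [hA, e2]
          filter_upwards [AEEqFun.coeFn_mk w2 hw2m, AEEqFun.coeFn_smul ε (ι g),
            hpoly p g] with ω h1 h2 h3
          rw [h1, h2]
          simp only [Pi.smul_apply, smul_eq_mul, hw2def]
          by_cases hmem : ω ∈ F
          · rw [Set.indicator_of_mem hmem, h3, abs_mul, abs_mul, abs_of_pos hε]
            exact mul_le_mul_of_nonneg_right (hp2 (φ ω) (hC ω) hmem) (abs_nonneg _)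
          · rw [Set.indicator_of_notMem hmem]; simp; positivity
        calc ‖A‖ ≤ ‖ε • g‖ := hb
          _ = ε * ‖g‖ := by rw [norm_smul, Real.norm_eq_abs, abs_of_pos hε]
      have hAgF : ‖A - gF‖ ≤ ‖T g - g‖ := by
        apply key
        have e1 : ι (A - gF) = ι A - ι gF := map_sub ι _ _
        have e3 : ι (T g - g) = ι (T g) - ι g := map_sub ι _ _
        rw [e1, e3, hA, hgF]
        filter_upwards [AEEqFun.coeFn_sub (AEEqFun.mk w2 hw2m) W,
          AEEqFun.coeFn_sub (ι (T g)) (ι g), AEEqFun.coeFn_mk w2 hw2m, hWcoe]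
          with ω h1 h2 h3 h4
        rw [h1, h2]
        simp only [Pi.sub_apply]
        rw [h3, h4]
        by_cases hmem : ω ∈ F
        · rw [hwdef, hw2def, Set.indicator_of_mem hmem, Set.indicator_of_mem hmem]
        · rw [hwdef, hw2def, Set.indicator_of_notMem hmem,
            Set.indicator_of_notMem hmem]
          simp
      calc ‖gF‖ = ‖A - (A - gF)‖ := by rw [sub_sub_cancel]
        _ ≤ ‖A‖ + ‖A - gF‖ := norm_sub_le _ _
        _ ≤ ε * ‖g‖ + ‖R‖ * (ε * ‖f‖) := add_le_add hAnorm (hAgF.trans hTg_norm)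
        _ = ε * (‖g‖ + ‖R‖ * ‖f‖) := by ring
    have hgF0 : gF = 0 := by
      by_contra hne
      have h0 : 0 < ‖gF‖ := norm_pos_iff.mpr hne
      set K := ‖g‖ + ‖R‖ * ‖f‖ with hK
      have hK0 : 0 ≤ K := by positivity
      have hb := hKey (‖gF‖ / (2 * (K + 1))) (by positivity)
      have hlt : ‖gF‖ / (2 * (K + 1)) * K < ‖gF‖ := by
        rw [div_mul_eq_mul_div, div_lt_iff₀ (by positivity)]
        nlinarith
      linarith
    have hW0 : W = 0 := by rw [← hgF, hgF0, map_zero]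
    have hw0 : w =ᵐ[μ] 0 := by
      have h1 : (W : Ω → ℝ) =ᵐ[μ] (0 : Ω →ₘ[μ] ℝ) := by rw [hW0]
      exact hWcoe.symm.trans (h1.trans AEEqFun.coeFn_zero)
    filter_upwards [hw0] with ω hω hωF
    have hmem : ω ∈ F := hωF
    rw [hwdef] at hω
    rw [Set.indicator_of_mem hmem] at hω
    simpa using hω
  have h_all : ∀ᵐ ω ∂μ, ∀ n : ℕ, α + 1/(n+1) ≤ φ ω → (ι g : Ω → ℝ) ω = 0 :=
    ae_all_iff.mpr fun n => main (α + 1/(n+1))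
      (lt_add_of_pos_right α (by positivity))
  filter_upwards [h_all] with ω hω hωE
  have hlt : α < φ ω := not_le.mp hωE
  obtain ⟨n, hn⟩ := exists_nat_one_div_lt (sub_pos.mpr hlt)
  exact hω n (by linarith)
end

section
/- Let Y be a Banach lattice, K : Y → Y a positive compact operator, and A : Y → Y an operator dominated by K (i.e., |Ax| ≤ K|x| for all x). Then for any norm bounded sequence (e_n) in Y, there exist a subsequence (e_{n_k}) and an element u ∈ Y⁺ such that |A e_{n_k}| ≤ u for all k. -/
open MeasureTheory

/-- if `A` is dominated by a positive compact operator `K` on a Banach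
lattice `Y`, then for every norm bounded sequence `(e_n)` the sequence `(A e_n)` has an
order bounded subsequence. -/
theorem dominated_by_compact_order_bounded_subsequence
    {Y : Type*} [NormedAddCommGroup Y] [Lattice Y] [HasSolidNorm Y] [IsOrderedAddMonoid Y] [NormedSpace ℝ Y] [CompleteSpace Y]
    (K A : Y →L[ℝ] Y) (hK_pos : ∀ x : Y, 0 ≤ x → 0 ≤ K x)
    (hK_compact : IsCompactOperator K)
    (hdom : ∀ x : Y, |A x| ≤ K |x|)
    (e : ℕ → Y) (C : ℝ) (he : ∀ n, ‖e n‖ ≤ C) :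
    ∃ n : ℕ → ℕ, StrictMono n ∧ ∃ u : Y, 0 ≤ u ∧ ∀ k, |A (e (n k))| ≤ u := by
  -- The images `K |e n|` lie in a compact set.
  obtain ⟨S, hS_compact, hS⟩ :=
    hK_compact.image_closedBall_subset_compact (𝕜₁ := ℝ) (f := (K : Y →ₗ[ℝ] Y)) C
  have hx : ∀ m, K |e m| ∈ S := by
    intro m
    apply hS
    exact ⟨|e m|, by simpa [Metric.mem_closedBall, norm_abs_eq_norm] using he m, rfl⟩
  obtain ⟨y, -, φ, hφ, hconv⟩ := hS_compact.tendsto_subseq hx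
  -- extract a fast-converging subsequence
  have : ∀ k : ℕ, ∃ N, ∀ m ≥ N, dist ((fun m => K |e (φ m)|) m) y < (1/2 : ℝ) ^ k := by
    intro k
    rcases (Metric.tendsto_atTop.mp hconv ((1/2 : ℝ) ^ k) (by positivity)) with ⟨N, hN⟩
    exact ⟨N, hN⟩
  obtain ⟨ψ, hψ, hfast⟩ := Filter.extraction_forall_of_eventually' this
  set n : ℕ → ℕ := φ ∘ ψ with hn
  have hnsm : StrictMono n := hφ.comp hψ
  set f : ℕ → Y := fun k => |K |e (n k)| - y| with hf
  have hsum : Summable f := by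
    apply Summable.of_norm_bounded (g := fun k => (1/2 : ℝ) ^ k) summable_geometric_two
    intro k
    rw [hf, norm_abs_eq_norm]
    exact le_of_lt (by simpa [dist_eq_norm, hn] using hfast k)
  refine ⟨n, hnsm, |y| + ∑' k, f k, ?_, ?_⟩
  · have h1 : (0 : Y) ≤ |y| := abs_nonneg y
    have h2 : (0 : Y) ≤ ∑' k, f k := tsum_nonneg fun k => abs_nonneg _
    exact add_nonneg h1 h2
  · intro k
    set z : Y := K |e (n k)| with hz
    have h1 : |A (e (n k))| ≤ z := hdom _
    have h2 : z ≤ |z| := le_abs_self _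
    have h3 : |z| ≤ |y| + f k := by
      have hzz : y + (z - y) = z := by abel
      calc |z| = |y + (z - y)| := by rw [hzz]
        _ ≤ |y| + |z - y| := abs_add_le _ _
    have h4 : f k ≤ ∑' j, f j := Summable.le_tsum hsum k fun j _ => abs_nonneg _
    calc |A (e (n k))| ≤ z := h1
      _ ≤ |z| := h2
      _ ≤ |y| + f k := h3
      _ ≤ |y| + ∑' j, f j := add_le_add_right h4 _
end

section
/- Let Ω be a compact Hausdorff space, φ ∈ C(Ω), and let R : C(Ω) → C(Ω) be a bounded operator commuting with the multiplication operator M_φ. Then for each ω ∈ Ω, the regular Borel measure R*δ_ω is supported on the level set W_ω = φ⁻¹({φ(ω)}); that is, |R*δ_ω|(Ω \ W_ω) = 0. -/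
open MeasureTheory

/-- if `R` is a bounded operator on `C(Ω)` (`Ω` compact Hausdorff) commuting
with the multiplication operator `M_φ`, then for each `ω ∈ Ω` the regular Borel measure
`R*δ_ω` is supported on the level set `W_ω = φ⁻¹({φ ω})`; equivalently (by regularity),
`⟨R*δ_ω, f⟩ = (Rf)(ω) = 0` for every `f ∈ C(Ω)` vanishing on `W_ω`. -/
theorem adjoint_dirac_supported_on_level_set
    {Ω : Type*} [TopologicalSpace Ω] [CompactSpace Ω] [T2Space Ω]
    (φ : C(Ω, ℝ))
    (Mφ : C(Ω, ℝ) →L[ℝ] C(Ω, ℝ)) (hMφ : ∀ f : C(Ω, ℝ), Mφ f = φ * f)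
    (R : C(Ω, ℝ) →L[ℝ] C(Ω, ℝ)) (hcomm : R.comp Mφ = Mφ.comp R)
    (ω : Ω) (f : C(Ω, ℝ)) (hf : ∀ x, φ x = φ ω → f x = 0) :
    R f ω = 0 := by
  set ψ : C(Ω, ℝ) := φ - ContinuousMap.const Ω (φ ω) with hψ
  set I : Ideal C(Ω, ℝ) := Ideal.span {ψ} with hI
  -- the functional g ↦ (R g) ω vanishes on I
  have hvan : ∀ g ∈ I, R g ω = 0 := by
    intro g hg
    rw [Ideal.mem_span_singleton] at hg
    obtain ⟨h, rfl⟩ := hg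
    have h1 : ψ * h = φ * h - (φ ω) • h := by
      ext x
      simp [hψ, sub_mul, smul_eq_mul]
    have h2 : R (φ * h) = φ * R h := by
      have := congrArg (fun T => T h) hcomm
      simpa [ContinuousLinearMap.comp_apply, hMφ] using this
    rw [h1, map_sub, _root_.map_smul, h2]
    simp
  -- f lies in the closure of I
  have hmem : f ∈ ContinuousMap.idealOfSet ℝ (ContinuousMap.setOfIdeal I) := by
    rw [ContinuousMap.mem_idealOfSet]
    intro x hx
    apply hf
    by_contra hne
    have hψx : ψ x ≠ 0 := by
      simpa [hψ, sub_eq_zero] using hne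
    exact hx (ContinuousMap.mem_setOfIdeal.mpr ⟨ψ, Ideal.mem_span_singleton_self ψ, hψx⟩)
  rw [ContinuousMap.idealOfSet_ofIdeal_eq_closure] at hmem
  -- conclude by continuity
  have hclosed : IsClosed {g : C(Ω, ℝ) | R g ω = 0} := by
    have : Continuous fun g : C(Ω, ℝ) => R g ω :=
      (continuous_eval_const ω).comp R.continuous
    exact isClosed_eq this continuous_const
  have hsub : closure (I : Set C(Ω, ℝ)) ⊆ {g : C(Ω, ℝ) | R g ω = 0} :=
    closure_minimal hvan hclosed
  exact hsub hmem
end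

section
/- Let Ω be a compact Hausdorff space and M_φ a positive multiplication operator on C(Ω) (so 0 ≤ φ ∈ C(Ω)). If M_φ is compact-friendly, then φ has a flat, i.e., there exists a non-empty open set V ⊆ Ω on which φ is constant. -/
open MeasureTheory

open Pointwise

section AuxCF

variable {Ω : Type*} [TopologicalSpace Ω] [CompactSpace Ω]

/-- If `R` commutes with multiplication by `φ`, then `R f` vanishes at `ω0` whenever `f`
vanishes on a `φ`-level neighborhood of `ω0`. -/
lemma cf_R_local (φ : C(Ω, ℝ)) (R : C(Ω, ℝ) →L[ℝ] C(Ω, ℝ))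
    (hR : ∀ f, R (φ * f) = φ * R f) (ω0 : Ω) (ε : ℝ) (hε : 0 < ε) (f : C(Ω, ℝ))
    (hf : ∀ ω, |φ ω - φ ω0| < ε → f ω = 0) :
    R f ω0 = 0 := by
  set t0 := φ ω0 with ht0
  set C : ℝ := (‖φ‖ + |t0|)^2 + 1 with hC
  have hC1 : 1 ≤ C := by
    have : 0 ≤ (‖φ‖ + |t0|)^2 := sq_nonneg _
    simp [hC]; linarith
  have hCpos : 0 < C := by linarith
  have hbound : ∀ ω, (φ ω - t0)^2 ≤ C - 1 := by
    intro ω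
    have h1 : |φ ω - t0| ≤ ‖φ‖ + |t0| := by
      have := φ.norm_coe_le_norm ω
      have h2 : |φ ω| ≤ ‖φ‖ := by simpa using this
      calc |φ ω - t0| ≤ |φ ω| + |t0| := abs_sub _ _
        _ ≤ ‖φ‖ + |t0| := by linarith
    have := sq_le_sq' (by linarith [abs_nonneg (φ ω - t0), neg_abs_le (φ ω - t0)]) (le_trans (le_abs_self _) h1)
    simp [hC]; nlinarith [abs_nonneg (φ ω - t0), sq_abs (φ ω - t0)]
  set w : C(Ω, ℝ) := 1 - C⁻¹ • (φ - ContinuousMap.const Ω t0)^2 with hw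
  have hwapp : ∀ ω, w ω = 1 - (φ ω - t0)^2 / C := by
    intro ω
    simp [hw, div_eq_inv_mul]
  -- commutation with w
  have hsub : ∀ g, R ((φ - ContinuousMap.const Ω t0) * g) = (φ - ContinuousMap.const Ω t0) * R g := by
    intro g
    have hconst : (ContinuousMap.const Ω t0) * g = t0 • g := by
      ext ω; simp
    have : (φ - ContinuousMap.const Ω t0) * g = φ * g - t0 • g := by
      rw [sub_mul, hconst]
    rw [this, map_sub, _root_.map_smul, hR]
    have hconst' : (ContinuousMap.const Ω t0) * R g = t0 • R g := by
      ext ω; simp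
    rw [sub_mul, hconst']
  have hwcomm : ∀ g, R (w * g) = w * R g := by
    intro g
    have hsq : (φ - ContinuousMap.const Ω t0)^2 * g
        = (φ - ContinuousMap.const Ω t0) * ((φ - ContinuousMap.const Ω t0) * g) := by
      rw [sq, mul_assoc]
    have h1 : R ((φ - ContinuousMap.const Ω t0)^2 * g)
        = (φ - ContinuousMap.const Ω t0)^2 * R g := by
      rw [hsq, hsub, hsub, ← mul_assoc, ← sq]
    have he : w * g = g - C⁻¹ • ((φ - ContinuousMap.const Ω t0)^2 * g) := by
      rw [hw, sub_mul, one_mul, smul_mul_assoc]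
    rw [he, map_sub, _root_.map_smul, h1, hw, sub_mul, one_mul, smul_mul_assoc]
  have hwpow : ∀ n g, R (w^n * g) = w^n * R g := by
    intro n
    induction n with
    | zero => intro g; simp
    | succ n ih =>
      intro g
      rw [pow_succ, mul_assoc, ih (w * g), hwcomm, ← mul_assoc, ← pow_succ]
  -- pointwise bounds on w
  set ε' : ℝ := min ε 1 with hε'
  have hε'pos : 0 < ε' := lt_min hε one_pos
  set ρ : ℝ := 1 - ε'^2 / C with hρ
  have hρ0 : 0 ≤ ρ := by
    have hε'1 : ε' ≤ 1 := min_le_right _ _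
    have : ε'^2 ≤ 1 := by nlinarith
    have : ε'^2 / C ≤ 1 := by
      rw [div_le_one hCpos]; linarith
    simp [hρ]; linarith
  have hρ1 : ρ < 1 := by
    have : 0 < ε'^2 / C := div_pos (by positivity) hCpos
    simp [hρ]; linarith
  have hw01 : ∀ ω, 0 ≤ w ω ∧ w ω ≤ 1 := by
    intro ω
    rw [hwapp]
    constructor
    · have hb := hbound ω
      have h2 : (φ ω - t0)^2 / C ≤ 1 := by
        rw [div_le_one hCpos]; linarith
      linarith
    · have : 0 ≤ (φ ω - t0)^2 / C := div_nonneg (sq_nonneg _) (le_of_lt hCpos)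
      linarith
  have hwsmall : ∀ ω, f ω ≠ 0 → w ω ≤ ρ := by
    intro ω hfω
    have h1 : ε ≤ |φ ω - t0| := by
      by_contra h
      push_neg at h
      exact hfω (hf ω h)
    have h2 : ε' ≤ |φ ω - t0| := le_trans (min_le_left _ _) h1
    have h3 : ε'^2 ≤ (φ ω - t0)^2 := by
      rw [← sq_abs (φ ω - t0)]
      exact pow_le_pow_left₀ (le_of_lt hε'pos) h2 2
    rw [hwapp, hρ]
    have : ε'^2 / C ≤ (φ ω - t0)^2 / C := by gcongr
    linarith
  have hnorm : ∀ n : ℕ, ‖w^n * f‖ ≤ ρ^n * ‖f‖ := by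
    intro n
    apply (ContinuousMap.norm_le _ (by positivity)).mpr
    intro ω
    by_cases hfω : f ω = 0
    · simp [hfω]
      positivity
    · have h1 : ‖(w^n * f) ω‖ = |w ω|^n * |f ω| := by
        simp [Real.norm_eq_abs, abs_mul, abs_pow]
      have h2 : |w ω| ≤ ρ := by
        rw [abs_of_nonneg (hw01 ω).1]; exact hwsmall ω hfω
      rw [h1]
      have h3 : |w ω|^n ≤ ρ^n := pow_le_pow_left₀ (abs_nonneg _) h2 n
      have h4 : |f ω| ≤ ‖f‖ := by
        have := f.norm_coe_le_norm ω
        simpa [Real.norm_eq_abs] using this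
      have := mul_le_mul h3 h4 (abs_nonneg _) (by positivity)
      linarith
  have hval : ∀ n : ℕ, R f ω0 = R (w^n * f) ω0 := by
    intro n
    rw [hwpow n f]
    have hw1 : w ω0 = 1 := by rw [hwapp]; simp [ht0]
    simp [hw1]
  have hineq : ∀ n : ℕ, |R f ω0| ≤ ‖R‖ * ‖f‖ * ρ^n := by
    intro n
    rw [hval n]
    have h1 : ‖R (w^n * f)‖ ≤ ‖R‖ * ‖w^n * f‖ := R.le_opNorm _
    have h2 : ‖(R (w^n * f)) ω0‖ ≤ ‖R (w^n * f)‖ := (R (w^n * f)).norm_coe_le_norm ω0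
    have h3 := hnorm n
    have h4 : ‖R‖ * ‖w^n * f‖ ≤ ‖R‖ * (ρ^n * ‖f‖) := by
      exact mul_le_mul_of_nonneg_left h3 (norm_nonneg R)
    rw [← Real.norm_eq_abs]
    calc ‖(R (w^n * f)) ω0‖ ≤ ‖R‖ * (ρ^n * ‖f‖) := by linarith
      _ = ‖R‖ * ‖f‖ * ρ^n := by ring
  have htend : Filter.Tendsto (fun n : ℕ => ‖R‖ * ‖f‖ * ρ^n) Filter.atTop (nhds 0) := by
    have := tendsto_pow_atTop_nhds_zero_of_lt_one hρ0 hρ1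
    have h := this.const_mul (‖R‖ * ‖f‖)
    simpa using h
  have : |R f ω0| ≤ 0 := ge_of_tendsto' htend hineq
  have := abs_nonneg (R f ω0)
  have : |R f ω0| = 0 := le_antisymm ‹|R f ω0| ≤ 0› ‹0 ≤ |R f ω0|›
  exact abs_eq_zero.mp this

/-- `A` dominated by a commuting `R` is also local. -/
lemma cf_A_local (φ : C(Ω, ℝ)) (R A : C(Ω, ℝ) →L[ℝ] C(Ω, ℝ))
    (hR : ∀ f, R (φ * f) = φ * R f) (hRA : ∀ x, |A x| ≤ R |x|)
    (ω0 : Ω) (ε : ℝ) (hε : 0 < ε) (f : C(Ω, ℝ))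
    (hf : ∀ ω, |φ ω - φ ω0| < ε → f ω = 0) :
    A f ω0 = 0 := by
  have h1 : R |f| ω0 = 0 := by
    apply cf_R_local φ R hR ω0 ε hε
    intro ω hω
    have := hf ω hω
    simp [ContinuousMap.abs_apply, this]
  have h2 : |A f| ω0 ≤ R |f| ω0 := hRA f ω0
  have h3 : |A f| ω0 = |(A f) ω0| := by simp [ContinuousMap.abs_apply]
  rw [h3, h1] at h2
  have := abs_nonneg ((A f) ω0)
  exact abs_eq_zero.mp (le_antisymm h2 this)

/-- Equicontinuity at a point of the image of a ball under a compact operator. -/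
lemma cf_K_equicont (K : C(Ω, ℝ) →L[ℝ] C(Ω, ℝ)) (hK : IsCompactOperator K)
    (ω0 : Ω) (M γ : ℝ) (hM : 0 ≤ M) (hγ : 0 < γ) :
    ∃ W : Set Ω, IsOpen W ∧ ω0 ∈ W ∧
      ∀ g : C(Ω, ℝ), ‖g‖ ≤ M → ∀ ω ∈ W, |K g ω - K g ω0| < γ := by
  obtain ⟨S, hScomp, hSmem⟩ := hK
  obtain ⟨r, hr, hball⟩ := Metric.mem_nhds_iff.mp hSmem
  set s : ℝ := r / (2 * (M + 1)) with hs
  have hspos : 0 < s := by positivity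
  set T : Set C(Ω, ℝ) := s⁻¹ • S with hT
  have hTcomp : IsCompact T := hScomp.smul s⁻¹
  have hmemT : ∀ g : C(Ω, ℝ), ‖g‖ ≤ M → K g ∈ T := by
    intro g hg
    have h1 : ‖s • g‖ < r := by
      rw [norm_smul s g, Real.norm_eq_abs, abs_of_pos hspos]
      have h2 : s * ‖g‖ ≤ s * M := mul_le_mul_of_nonneg_left hg (le_of_lt hspos)
      have h3 : s * M < r := by
        rw [hs]
        rw [div_mul_eq_mul_div, div_lt_iff₀ (by positivity)]
        nlinarith
      linarith
    have h4 : K (s • g) ∈ S := hball (by simpa [Metric.mem_ball, dist_eq_norm] using h1)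
    have h5 : K (s • g) = s • K g := map_smul K s g
    refine ⟨K (s • g), h4, ?_⟩
    show s⁻¹ • K (s • g) = K g
    rw [h5, smul_smul, inv_mul_cancel₀ (ne_of_gt hspos), one_smul]
  have hTB := hTcomp.totallyBounded
  obtain ⟨t, htfin, htsub⟩ := (Metric.totallyBounded_iff.mp hTB) (γ/3) (by positivity)
  refine ⟨⋂ y ∈ t, {ω | |y ω - y ω0| < γ/3}, ?_, ?_, ?_⟩
  · apply htfin.isOpen_biInter
    intro y _
    have hc : Continuous fun ω => |y ω - y ω0| := (y.continuous.sub continuous_const).abs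
    exact isOpen_lt hc continuous_const
  · apply Set.mem_iInter.mpr
    intro y
    apply Set.mem_iInter.mpr
    intro _
    show |y ω0 - y ω0| < γ/3
    simp; positivity
  · intro g hg ω hω
    have hKgT := hmemT g hg
    have := htsub hKgT
    simp only [Set.mem_iUnion] at this
    obtain ⟨y, hy, hKgy⟩ := this
    have hd : ∀ ω', |K g ω' - y ω'| < γ/3 := by
      intro ω'
      have h1 : dist (K g) y < γ/3 := by simpa [Metric.mem_ball] using hKgy
      have h2 : ‖K g - y‖ < γ/3 := by rwa [dist_eq_norm] at h1
      have h3 := (K g - y).norm_coe_le_norm ω'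
      simp only [ContinuousMap.coe_sub, Pi.sub_apply, Real.norm_eq_abs] at h3
      linarith
    have hWy : |y ω - y ω0| < γ/3 := by
      have := Set.mem_iInter.mp hω y
      have := Set.mem_iInter.mp this hy
      exact this
    have := hd ω
    have := hd ω0
    have e1 : K g ω - K g ω0 = (K g ω - y ω) + (y ω - y ω0) + (y ω0 - K g ω0) := by ring
    rw [e1]
    have e2 := abs_add_three (K g ω - y ω) (y ω - y ω0) (y ω0 - K g ω0)
    have h5 : |y ω0 - K g ω0| = |K g ω0 - y ω0| := abs_sub_comm _ _
    rw [h5] at e2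
    linarith [hd ω, hd ω0, hWy]

/-- If `φ` has no flat, then on any nonempty open set it avoids any finite set of values
somewhere. -/
lemma cf_avoid (φ : C(Ω, ℝ))
    (hflat : ∀ V : Set Ω, IsOpen V → V.Nonempty → ∀ c : ℝ, ∃ ω ∈ V, φ ω ≠ c)
    (st : Finset ℝ) :
    ∀ W : Set Ω, IsOpen W → W.Nonempty → ∃ ω ∈ W, φ ω ∉ st := by
  induction st using Finset.induction_on with
  | empty => intro W _ hWne; obtain ⟨ω, hω⟩ := hWne; exact ⟨ω, hω, by simp⟩
  | @insert a st ha ih =>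
    intro W hW hWne
    set W' : Set Ω := W ∩ (φ ⁻¹' {a})ᶜ with hW'
    have hW'open : IsOpen W' := hW.inter (IsOpen.preimage φ.continuous isClosed_singleton.isOpen_compl)
    by_cases hne : W'.Nonempty
    · obtain ⟨ω, hωW', hωst⟩ := ih W' hW'open hne
      obtain ⟨hωW, hωa⟩ := hωW'
      refine ⟨ω, hωW, ?_⟩
      simp only [Finset.mem_insert, not_or]
      exact ⟨by simpa using hωa, hωst⟩
    · exfalso
      obtain ⟨ω, hωW, hωa⟩ := hflat W hW hWne a
      apply hne
      exact ⟨ω, hωW, by simpa using hωa⟩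

/-- Build `N` distinct values of `φ` attained on `W`. -/
lemma cf_values (φ : C(Ω, ℝ))
    (hflat : ∀ V : Set Ω, IsOpen V → V.Nonempty → ∀ c : ℝ, ∃ ω ∈ V, φ ω ≠ c)
    (W : Set Ω) (hW : IsOpen W) (hWne : W.Nonempty) (N : ℕ) :
    ∃ st : Finset ℝ, st.card = N ∧ ∀ t ∈ st, ∃ ω ∈ W, φ ω = t := by
  induction N with
  | zero => exact ⟨∅, rfl, by simp⟩
  | succ n ih =>
    obtain ⟨st, hcard, hwit⟩ := ih
    obtain ⟨ω, hωW, hωst⟩ := cf_avoid φ hflat st W hW hWne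
    refine ⟨insert (φ ω) st, ?_, ?_⟩
    · rw [Finset.card_insert_of_notMem hωst, hcard]
    · intro t ht
      rcases Finset.mem_insert.mp ht with h | h
      · exact ⟨ω, hωW, h.symm⟩
      · exact hwit t h

end AuxCF

section Bump

/-- A trapezoidal bump function: `1` on `[t-ε/2, t+ε/2]`, `0` outside `(t-ε, t+ε)`. -/
noncomputable def cfBump (t ε : ℝ) : C(ℝ, ℝ) :=
  ⟨fun x => max 0 (min 1 (2 - (2/ε) * |x - t|)),
    continuous_const.max (continuous_const.min
      (continuous_const.sub (continuous_const.mul ((continuous_id.sub continuous_const).abs))))⟩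

lemma cfBump_apply (t ε x : ℝ) : cfBump t ε x = max 0 (min 1 (2 - (2/ε) * |x - t|)) := rfl

lemma cfBump_nonneg (t ε x : ℝ) : 0 ≤ cfBump t ε x := le_max_left _ _

lemma cfBump_le_one (t ε x : ℝ) : cfBump t ε x ≤ 1 := by
  rw [cfBump_apply]
  apply max_le (by norm_num) (min_le_left _ _)

lemma cfBump_eq_one (t ε x : ℝ) (hε : 0 < ε) (h : |x - t| ≤ ε/2) : cfBump t ε x = 1 := by
  rw [cfBump_apply]
  have h1 : (2/ε) * |x - t| ≤ 1 := by
    have := mul_le_mul_of_nonneg_left h (le_of_lt (by positivity : (0:ℝ) < 2/ε))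
    calc (2/ε) * |x - t| ≤ (2/ε) * (ε/2) := this
      _ = 1 := by field_simp
  have h2 : min 1 (2 - (2/ε) * |x - t|) = 1 := min_eq_left (by linarith)
  rw [h2]
  exact max_eq_right (by norm_num)

lemma cfBump_eq_zero (t ε x : ℝ) (hε : 0 < ε) (h : ε ≤ |x - t|) : cfBump t ε x = 0 := by
  rw [cfBump_apply]
  have h1 : 2 ≤ (2/ε) * |x - t| := by
    have := mul_le_mul_of_nonneg_left h (le_of_lt (by positivity : (0:ℝ) < 2/ε))
    calc (2:ℝ) = (2/ε) * ε := by field_simp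
      _ ≤ (2/ε) * |x - t| := this
  apply max_eq_left
  calc min 1 (2 - (2/ε) * |x - t|) ≤ 2 - (2/ε) * |x - t| := min_le_right _ _
    _ ≤ 0 := by linarith

end Bump


/-- A positive operator `B` on a Banach lattice is *compact-friendly* if there exist
non-zero operators `R, K, A` with `R, K` positive, `K` compact, `R` commuting with `B`,
and both `R` and `K` dominating `A`. -/
def CompactFriendly {X : Type*} [NormedAddCommGroup X] [Lattice X] [Module ℝ X]
    (B : X →L[ℝ] X) : Prop :=
  ∃ R K A : X →L[ℝ] X, R ≠ 0 ∧ K ≠ 0 ∧ A ≠ 0 ∧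
    (∀ x : X, 0 ≤ x → 0 ≤ R x) ∧ (∀ x : X, 0 ≤ x → 0 ≤ K x) ∧
    IsCompactOperator K ∧ R.comp B = B.comp R ∧
    (∀ x : X, |A x| ≤ R |x|) ∧ (∀ x : X, |A x| ≤ K |x|)

/-- if the positive multiplication operator `M_φ` on `C(Ω)` (`Ω` compact
Hausdorff, `0 ≤ φ`) is compact-friendly, then `φ` is constant on some non-empty open set. -/
theorem compactFriendly_multiplication_CΩ_has_flat
    {Ω : Type*} [TopologicalSpace Ω] [CompactSpace Ω] [T2Space Ω]
    (φ : C(Ω, ℝ)) (hφ : 0 ≤ φ)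
    (Mφ : C(Ω, ℝ) →L[ℝ] C(Ω, ℝ)) (hMφ : ∀ f : C(Ω, ℝ), Mφ f = φ * f)
    (hcf : CompactFriendly Mφ) :
    ∃ V : Set Ω, IsOpen V ∧ V.Nonempty ∧ ∃ c : ℝ, ∀ ω ∈ V, φ ω = c := by
  have hcf' : ∃ R K A : C(Ω, ℝ) →L[ℝ] C(Ω, ℝ), R ≠ 0 ∧ K ≠ 0 ∧ A ≠ 0 ∧
      (∀ x, 0 ≤ x → 0 ≤ R x) ∧ (∀ x, 0 ≤ x → 0 ≤ K x) ∧
      IsCompactOperator K ∧ R.comp Mφ = Mφ.comp R ∧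
      (∀ x, |A x| ≤ R |x|) ∧ (∀ x, |A x| ≤ K |x|) := hcf
  clear hcf
  rename' hcf' => hcf
  by_contra hflat
  push_neg at hflat
  obtain ⟨R, K, A, hRne, hKne, hAne, hRpos, hKpos, hKcomp, hcomm, hAR, hAK⟩ := hcf
  -- R commutes with multiplication by φ
  have hR : ∀ f, R (φ * f) = φ * R f := by
    intro f
    have h1 := ContinuousLinearMap.ext_iff.mp hcomm f
    simp only [ContinuousLinearMap.comp_apply] at h1
    rw [hMφ, hMφ] at h1
    exact h1
  -- a point where A is nonzero
  have hx0 : ∃ x0, A x0 ≠ 0 := by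
    by_contra h
    push_neg at h
    exact hAne (ContinuousLinearMap.ext fun x => by simp [h x])
  obtain ⟨x0, hx0ne⟩ := hx0
  have hω0 : ∃ ω0, A x0 ω0 ≠ 0 := by
    by_contra h
    push_neg at h
    exact hx0ne (ContinuousMap.ext fun ω => by simp [h ω])
  obtain ⟨ω0, hω0ne⟩ := hω0
  set c : ℝ := |A x0 ω0| with hc
  have hcpos : 0 < c := abs_pos.mpr hω0ne
  -- constants
  set C0 : ℝ := K |x0| ω0 with hC0
  have hC0nonneg : 0 ≤ C0 := by
    have := hKpos |x0| (abs_nonneg x0)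
    exact this ω0
  set N : ℕ := ⌈4 * C0 / c⌉₊ + 2 with hN
  -- the open neighborhoods
  set W0 : Set Ω := {ω | c/2 < |A x0 ω|} with hW0
  have hW0open : IsOpen W0 := isOpen_lt continuous_const ((A x0).continuous.abs)
  have hω0W0 : ω0 ∈ W0 := by
    show c/2 < |A x0 ω0|
    rw [← hc]; linarith
  obtain ⟨W1, hW1open, hω0W1, hW1⟩ :=
    cf_K_equicont K hKcomp ω0 ‖x0‖ (c/4) (norm_nonneg x0) (by positivity)
  set W : Set Ω := W0 ∩ W1 with hW
  have hWopen : IsOpen W := hW0open.inter hW1open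
  have hWne : W.Nonempty := ⟨ω0, hω0W0, hω0W1⟩
  -- N points in W with distinct φ-values
  obtain ⟨st, hstcard, hwit⟩ := cf_values φ hflat W hWopen hWne N
  choose ωf hωfW hωfval using hwit
  -- minimal gap between values
  have hst2 : 1 < st.card := by rw [hstcard]; omega
  obtain ⟨a, ha, b, hb, hab⟩ := Finset.one_lt_card.mp hst2
  set pairs : Finset (ℝ × ℝ) := (st ×ˢ st).filter (fun p => p.1 ≠ p.2) with hpairs
  have hpairsne : pairs.Nonempty := by
    refine ⟨(a, b), ?_⟩
    rw [hpairs, Finset.mem_filter, Finset.mem_product]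
    exact ⟨⟨ha, hb⟩, hab⟩
  set dset : Finset ℝ := pairs.image (fun p => |p.1 - p.2|) with hdset
  have hdsetne : dset.Nonempty := hpairsne.image _
  set d : ℝ := dset.min' hdsetne with hd
  have hdpos : 0 < d := by
    have hmem := dset.min'_mem hdsetne
    rw [← hd, hdset] at hmem
    obtain ⟨p, hp, hpd⟩ := Finset.mem_image.mp hmem
    rw [hpairs, Finset.mem_filter] at hp
    rw [← hpd]
    exact abs_pos.mpr (sub_ne_zero.mpr hp.2)
  have hdle : ∀ t ∈ st, ∀ t' ∈ st, t ≠ t' → d ≤ |t - t'| := by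
    intro t ht t' ht' htt'
    apply Finset.min'_le
    rw [hdset]
    apply Finset.mem_image.mpr
    refine ⟨(t, t'), ?_, rfl⟩
    rw [hpairs, Finset.mem_filter, Finset.mem_product]
    exact ⟨⟨ht, ht'⟩, htt'⟩
  set ε : ℝ := d/3 with hε
  have hεpos : 0 < ε := by positivity
  -- bump composites
  set B : ℝ → C(Ω, ℝ) := fun t => (cfBump t ε).comp φ with hB
  have hBapp : ∀ t ω, B t ω = cfBump t ε (φ ω) := fun t ω => rfl
  set g : ℝ → C(Ω, ℝ) := fun t => B t * |x0| with hg
  -- pointwise facts for each t ∈ st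
  have hkey : ∀ t ∈ st, c/4 < K (g t) ω0 := by
    intro t ht
    set ωt : Ω := ωf t ht with hωt
    have hωtW : ωt ∈ W := hωfW t ht
    have hφωt : φ ωt = t := hωfval t ht
    -- localization
    have hvanish : ∀ ω, |φ ω - φ ωt| < ε/2 → (x0 - B t * x0) ω = 0 := by
      intro ω hω
      rw [hφωt] at hω
      have hb1 : cfBump t ε (φ ω) = 1 := cfBump_eq_one t ε (φ ω) hεpos (le_of_lt hω)
      simp [ContinuousMap.sub_apply, ContinuousMap.mul_apply, hBapp, hb1]
    have hloc0 : A (x0 - B t * x0) ωt = 0 :=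
      cf_A_local φ R A hR hAR ωt (ε/2) (by positivity) _ hvanish
    have hloc : A x0 ωt = A (B t * x0) ωt := by
      have := congrArg (fun h : C(Ω, ℝ) => h ωt) (map_sub A x0 (B t * x0))
      simp only [ContinuousMap.sub_apply] at this
      rw [hloc0] at this
      linarith
    -- domination by K
    have habs : |B t * x0| = g t := by
      ext ω
      simp only [ContinuousMap.abs_apply, ContinuousMap.mul_apply, hg]
      rw [abs_mul]
      congr 1
      exact abs_of_nonneg (cfBump_nonneg t ε (φ ω))
    have hdom : |A (B t * x0) ωt| ≤ K (g t) ωt := by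
      have h1 := hAK (B t * x0) ωt
      rw [habs] at h1
      simpa [ContinuousMap.abs_apply] using h1
    have hW0t : c/2 < |A x0 ωt| := hωtW.1
    have h2 : c/2 < K (g t) ωt := by rw [hloc] at hW0t; linarith
    -- equicontinuity
    have hgnorm : ‖g t‖ ≤ ‖x0‖ := by
      apply (ContinuousMap.norm_le _ (norm_nonneg x0)).mpr
      intro ω
      rw [Real.norm_eq_abs]
      simp only [hg, ContinuousMap.mul_apply, ContinuousMap.abs_apply]
      rw [abs_mul, abs_abs]
      have h3 : |B t ω| ≤ 1 := by
        rw [hBapp, abs_of_nonneg (cfBump_nonneg _ _ _)]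
        exact cfBump_le_one _ _ _
      have h4 : |x0 ω| ≤ ‖x0‖ := by
        have := x0.norm_coe_le_norm ω
        simpa [Real.norm_eq_abs] using this
      nlinarith [abs_nonneg (x0 ω)]
    have h5 : |K (g t) ωt - K (g t) ω0| < c/4 := hW1 (g t) hgnorm ωt hωtW.2
    have h6 : K (g t) ωt - K (g t) ω0 ≤ |K (g t) ωt - K (g t) ω0| := le_abs_self _
    linarith
  -- the sum of bumps is at most 1
  have hsum1 : ∀ x : ℝ, (∑ t ∈ st, cfBump t ε x) ≤ 1 := by
    intro x
    by_cases hex : ∃ t0 ∈ st, cfBump t0 ε x ≠ 0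
    · obtain ⟨t0, ht0, ht0ne⟩ := hex
      have hx0close : |x - t0| < ε := by
        by_contra h
        push_neg at h
        exact ht0ne (cfBump_eq_zero t0 ε x hεpos h)
      have hothers : ∀ t ∈ st, t ≠ t0 → cfBump t ε x = 0 := by
        intro t ht htne
        apply cfBump_eq_zero t ε x hεpos
        have hgap : d ≤ |t - t0| := hdle t ht t0 ht0 htne
        have htri : |t - t0| ≤ |x - t| + |x - t0| := by
          have := abs_sub_abs_le_abs_sub (x - t0) (x - t)
          have h7 := abs_sub (x - t) (x - t0)
          calc |t - t0| = |(x - t0) - (x - t)| := by ring_nf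
            _ ≤ |x - t0| + |x - t| := abs_sub _ _
            _ = |x - t| + |x - t0| := by ring
        have : d ≤ |x - t| + ε := by linarith
        rw [hε] at *
        linarith [hgap, hx0close]
      rw [Finset.sum_eq_single_of_mem t0 ht0 hothers]
      exact cfBump_le_one _ _ _
    · push_neg at hex
      rw [Finset.sum_eq_zero hex]
      norm_num
  -- sum of the g's is ≤ |x0|
  have hsumle : (∑ t ∈ st, g t) ≤ |x0| := by
    rw [ContinuousMap.le_def]
    intro ω
    have h1 : (∑ t ∈ st, g t) ω = (∑ t ∈ st, cfBump t ε (φ ω)) * |x0| ω := by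
      simp only [hg, ContinuousMap.coe_sum, Finset.sum_apply, ContinuousMap.mul_apply,
        Finset.sum_mul]
      exact Finset.sum_congr rfl fun t _ => by rw [hBapp]
    rw [h1]
    have h3 : 0 ≤ |x0| ω := by
      rw [ContinuousMap.abs_apply]; exact abs_nonneg _
    have h4 := hsum1 (φ ω)
    nlinarith
  -- apply K and evaluate at ω0
  have hKsum : ∑ t ∈ st, K (g t) ω0 ≤ C0 := by
    have h1 : K (∑ t ∈ st, g t) ≤ K |x0| := by
      have h2 : (0:C(Ω,ℝ)) ≤ |x0| - (∑ t ∈ st, g t) := by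
        rw [sub_nonneg]; exact hsumle
      have h3 := hKpos _ h2
      rw [map_sub] at h3
      exact sub_nonneg.mp h3
    have h4 : K (∑ t ∈ st, g t) = ∑ t ∈ st, K (g t) := map_sum K g st
    have h5 := ContinuousMap.le_def.mp h1 ω0
    rw [h4] at h5
    have h6 : (∑ t ∈ st, K (g t)) ω0 = ∑ t ∈ st, K (g t) ω0 := by simp
    rw [h6] at h5
    exact h5
  -- final contradiction
  have hstne : st.Nonempty := Finset.card_pos.mp (by omega)
  have hlower : (N : ℝ) * (c/4) < ∑ t ∈ st, K (g t) ω0 := by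
    have := Finset.sum_lt_sum_of_nonempty hstne hkey
    rw [Finset.sum_const] at this
    rw [hstcard] at this
    simpa [nsmul_eq_mul] using this
  have hNbig : C0 < (N : ℝ) * (c/4) := by
    have h1 : 4 * C0 / c ≤ (⌈4 * C0 / c⌉₊ : ℝ) := Nat.le_ceil _
    have h2 : ((⌈4 * C0 / c⌉₊ : ℝ)) + 2 = (N : ℝ) := by
      rw [hN]; push_cast; try ring_nf
    have h3 : 4 * C0 / c < (N : ℝ) := by linarith
    have h4 : 4 * C0 / c * (c/4) = C0 := by field_simp; try ring
    calc C0 = 4 * C0 / c * (c/4) := h4.symm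
      _ < (N : ℝ) * (c/4) := by
          apply mul_lt_mul_of_pos_right h3 (by positivity)
  linarith
end

section
/- Let Ω be a compact Hausdorff space and 0 ≤ φ ∈ C(Ω). The positive multiplication operator M_φ on C(Ω) is compact-friendly if and only if φ is constant on some non-empty open subset of Ω. -/
open MeasureTheory Filter Topology

section AuxLemmas

/-- An order-bounded pairwise-disjoint sequence in `C(Ω,ℝ)` is weakly null. -/
lemma aux_disjoint_weak_null {Ω : Type*} [TopologicalSpace Ω] [CompactSpace Ω]
    (x : C(Ω, ℝ)) (y : ℕ → C(Ω, ℝ))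
    (h0 : ∀ n ω, 0 ≤ y n ω) (hle : ∀ n ω, y n ω ≤ |x ω|)
    (hdisj : ∀ n m, n ≠ m → ∀ ω, y n ω * y m ω = 0)
    (μ : C(Ω, ℝ) →L[ℝ] ℝ) :
    Tendsto (fun n => μ (y n)) atTop (𝓝 0) := by
  set a : ℕ → ℝ := fun n => μ (y n) with ha
  set ε : ℕ → ℝ := fun n => if 0 ≤ a n then 1 else -1 with hε
  have habs : ∀ n, |a n| = ε n * a n := by
    intro n
    by_cases h : 0 ≤ a n
    · simp [hε, h, abs_of_nonneg h]
    · simp only [hε, h, if_false]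
      rw [abs_of_neg (lt_of_not_ge h)]; ring
  have hbound : ∀ N : ℕ, ∑ n ∈ Finset.range N, |a n| ≤ ‖μ‖ * ‖x‖ := by
    intro N
    set z : C(Ω, ℝ) := ∑ n ∈ Finset.range N, ε n • y n with hz
    have hzval : ∀ ω, z ω = ∑ n ∈ Finset.range N, ε n * y n ω := by
      intro ω
      simp [hz, ContinuousMap.sum_apply, smul_eq_mul]
    have hznorm : ‖z‖ ≤ ‖x‖ := by
      rw [ContinuousMap.norm_le _ (norm_nonneg x)]
      intro ω
      rw [Real.norm_eq_abs, hzval]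
      by_cases hex : ∃ n ∈ Finset.range N, y n ω ≠ 0
      · obtain ⟨n₀, hn₀, hn₀ne⟩ := hex
        rw [Finset.sum_eq_single_of_mem n₀ hn₀ ?_]
        · have h1 : |ε n₀ * y n₀ ω| ≤ |y n₀ ω| := by
            rw [abs_mul]
            have : |ε n₀| = 1 := by by_cases h : 0 ≤ a n₀ <;> simp [hε, h]
            rw [this, one_mul]
          refine h1.trans ?_
          rw [abs_of_nonneg (h0 n₀ ω)]
          exact (hle n₀ ω).trans (by
            have := ContinuousMap.norm_coe_le_norm x ω
            rwa [Real.norm_eq_abs] at this)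
        · intro b _ hbne
          have := hdisj b n₀ hbne ω
          rcases mul_eq_zero.mp this with h | h
          · rw [h, mul_zero]
          · exact absurd h hn₀ne
      · push_neg at hex
        have : ∑ n ∈ Finset.range N, ε n * y n ω = 0 :=
          Finset.sum_eq_zero fun n hn => by rw [hex n hn, mul_zero]
        rw [this, abs_zero]
        exact norm_nonneg x
    have hμz : μ z = ∑ n ∈ Finset.range N, |a n| := by
      rw [hz, map_sum]
      refine Finset.sum_congr rfl fun n _ => ?_
      rw [_root_.map_smul, smul_eq_mul, ← habs]
    calc ∑ n ∈ Finset.range N, |a n| = μ z := hμz.symm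
      _ ≤ |μ z| := le_abs_self _
      _ ≤ ‖μ‖ * ‖z‖ := by
          have := μ.le_opNorm z
          rwa [Real.norm_eq_abs] at this
      _ ≤ ‖μ‖ * ‖x‖ := mul_le_mul_of_nonneg_left hznorm (norm_nonneg μ)
  have hsum : Summable fun n => |a n| :=
    summable_of_sum_range_le (fun n => abs_nonneg _) hbound
  exact squeeze_zero_norm (fun n => le_of_eq (Real.norm_eq_abs _))
    hsum.tendsto_atTop_zero

/-- A compact operator sends bounded weakly-null sequences to norm-null sequences. -/
lemma aux_compact_null {X : Type*} [NormedAddCommGroup X] [NormedSpace ℝ X]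
    {K : X →L[ℝ] X} (hK : IsCompactOperator K) (y : ℕ → X) (c : ℝ)
    (hbd : ∀ n, ‖y n‖ ≤ c)
    (hweak : ∀ μ : X →L[ℝ] ℝ, Tendsto (fun n => μ (y n)) atTop (𝓝 0)) :
    Tendsto (fun n => K (y n)) atTop (𝓝 0) := by
  obtain ⟨W, hWc, hWn⟩ := hK
  obtain ⟨r, hr, hball⟩ := Metric.mem_nhds_iff.mp hWn
  have hc0 : (0:ℝ) ≤ c := (norm_nonneg (y 0)).trans (hbd 0)
  set s : ℝ := r / (2 * (c + 1)) with hs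
  have hs0 : 0 < s := by positivity
  have hmem : ∀ n, K (s • y n) ∈ W := by
    intro n
    apply hball
    rw [Metric.mem_ball, dist_zero_right, norm_smul, Real.norm_eq_abs, abs_of_pos hs0]
    calc s * ‖y n‖ ≤ s * c := mul_le_mul_of_nonneg_left (hbd n) hs0.le
      _ < s * (2 * (c + 1)) := by nlinarith
      _ = r := by rw [hs, div_mul_cancel₀]; positivity
  apply tendsto_of_subseq_tendsto
  intro ns hns
  obtain ⟨w, hwW, ms, hms, hconv⟩ := hWc.tendsto_subseq (fun k => hmem (ns k))
  have hw0 : w = 0 := by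
    by_contra hw
    obtain ⟨g, hg1, hgw⟩ := exists_dual_vector ℝ w (norm_ne_zero_iff.mpr hw)
    have h1 : Tendsto (fun k => g (K (s • y (ns (ms k))))) atTop (𝓝 (g w)) :=
      (g.continuous.tendsto w).comp hconv
    have h2 : Tendsto (fun k => g (K (s • y (ns (ms k))))) atTop (𝓝 0) := by
      have h3 : Tendsto (fun n => (g.comp K) (y n)) atTop (𝓝 0) := hweak (g.comp K)
      have h4 : Tendsto (fun k => (g.comp K) (y (ns (ms k)))) atTop (𝓝 0) :=
        h3.comp (hns.comp hms.tendsto_atTop)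
      have h5 : Tendsto (fun k => s * (g.comp K) (y (ns (ms k)))) atTop (𝓝 (s * 0)) :=
        h4.const_mul s
      rw [mul_zero] at h5
      convert h5 using 2 with k
      simp [_root_.map_smul, smul_eq_mul]
    have hgw0 : g w = 0 := tendsto_nhds_unique h1 h2
    rw [hgw] at hgw0
    exact hw (norm_eq_zero.mp (by exact_mod_cast hgw0))
  refine ⟨ms, ?_⟩
  have : Tendsto (fun k => s⁻¹ • K (s • y (ns (ms k)))) atTop (𝓝 (s⁻¹ • w)) :=
    hconv.const_smul s⁻¹
  rw [hw0, smul_zero] at this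
  convert this using 2 with k
  rw [_root_.map_smul, smul_smul, inv_mul_cancel₀ hs0.ne', one_smul]

/-- If a continuous operator on `C(Ω,ℝ)` commutes with multiplication by `φ`, it commutes
with multiplication by `g ∘ φ` for every continuous `g`. -/
lemma aux_comm_cont {Ω : Type*} [TopologicalSpace Ω] [CompactSpace Ω]
    (φ : C(Ω, ℝ)) (R : C(Ω, ℝ) →L[ℝ] C(Ω, ℝ))
    (hcomm : ∀ f, R (φ * f) = φ * R f) (g : ℝ → ℝ) (hg : Continuous g)
    (f : C(Ω, ℝ)) :
    R ((ContinuousMap.mk g hg).comp φ * f) = (ContinuousMap.mk g hg).comp φ * R f := by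
  set S : Subalgebra ℝ C(Ω, ℝ) :=
    { carrier := {ψ | ∀ f, R (ψ * f) = ψ * R f}
      mul_mem' := by
        intro a b ha hb f
        rw [mul_assoc, ha, hb, mul_assoc]
      one_mem' := by intro f; rw [one_mul, one_mul]
      add_mem' := by
        intro a b ha hb f
        rw [add_mul, map_add, ha, hb, add_mul]
      zero_mem' := by intro f; simp
      algebraMap_mem' := by
        intro r f
        rw [← Algebra.smul_def, _root_.map_smul, Algebra.smul_def] } with hS
  have hφS : φ ∈ S := hcomm
  have hScl : IsClosed (S : Set C(Ω, ℝ)) := by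
    have : (S : Set C(Ω, ℝ)) = ⋂ f : C(Ω, ℝ), {ψ | R (ψ * f) = ψ * R f} := by
      ext ψ
      simp only [Set.mem_iInter, Set.mem_setOf_eq]
      rfl
    rw [this]
    exact isClosed_iInter fun f =>
      isClosed_eq (R.continuous.comp (continuous_mul_right f)) (continuous_mul_right (R f))
  set fS : S := ⟨φ, hφS⟩ with hfS
  set p : C(Set.Icc (-‖fS‖) ‖fS‖, ℝ) :=
    ContinuousMap.mk (fun t => g t.1) (hg.comp continuous_subtype_val) with hp
  have hmem : p.comp (ContinuousMap.attachBound (fS : C(Ω, ℝ))) ∈ S.topologicalClosure :=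
    ContinuousMap.comp_attachBound_mem_closure S fS p
  have hmem' : p.comp (ContinuousMap.attachBound (fS : C(Ω, ℝ))) ∈ S :=
    (Subalgebra.topologicalClosure_minimal le_rfl hScl) hmem
  have heq : p.comp (ContinuousMap.attachBound (fS : C(Ω, ℝ))) =
      (ContinuousMap.mk g hg).comp φ := by
    ext ω
    rfl
  rw [← heq]
  exact hmem' f

/-- From an infinite subset of a compact set of reals one can extract a sequence of points
with pairwise "well-separated" neighborhoods. -/
lemma aux_separated_centers {S : Set ℝ} (hS : S.Infinite) {C : Set ℝ} (hC : IsCompact C)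
    (hSC : S ⊆ C) :
    ∃ (c : ℕ → ℝ) (ρ : ℕ → ℝ), (∀ n, c n ∈ S) ∧ (∀ n, 0 < ρ n) ∧
      ∀ n m, n ≠ m → ρ n + ρ m < |c n - c m| := by
  obtain ⟨L, -, hacc⟩ := hS.exists_accPt_of_subset_isCompact hC hSC
  rw [accPt_iff_nhds] at hacc
  have hstep : ∀ ε : ℝ, 0 < ε → ∃ s : ℝ, (s ∈ S ∧ s ≠ L) ∧ |s - L| < ε := by
    intro ε hε
    obtain ⟨y, ⟨hyb, hyS⟩, hyne⟩ := hacc (Metric.ball L ε) (Metric.ball_mem_nhds L hε)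
    exact ⟨y, ⟨hyS, hyne⟩, by simpa [Real.dist_eq] using hyb⟩
  obtain ⟨c, hcS, hcne, hcdec⟩ : ∃ c : ℕ → ℝ, (∀ n, c n ∈ S) ∧ (∀ n, c n ≠ L) ∧
      ∀ n, |c (n + 1) - L| < |c n - L| / 4 := by
    have key : ∀ p : {s : ℝ // s ∈ S ∧ s ≠ L}, ∃ q : {s : ℝ // s ∈ S ∧ s ≠ L},
        |q.1 - L| < |p.1 - L| / 4 := by
      intro p
      have hp : 0 < |p.1 - L| / 4 := by
        have := abs_pos.mpr (sub_ne_zero.mpr p.2.2)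
        linarith
      obtain ⟨s, hs, hlt⟩ := hstep _ hp
      exact ⟨⟨s, hs⟩, hlt⟩
    choose next hnext using key
    obtain ⟨s0, hs0, -⟩ := hstep 1 one_pos
    refine ⟨fun n => (next^[n] ⟨s0, hs0⟩).1, fun n => (next^[n] ⟨s0, hs0⟩).2.1,
      fun n => (next^[n] ⟨s0, hs0⟩).2.2, fun n => ?_⟩
    simp only []
    rw [Function.iterate_succ_apply']
    exact hnext _
  set d : ℕ → ℝ := fun n => |c n - L| with hd
  have hd0 : ∀ n, 0 < d n := fun n => abs_pos.mpr (sub_ne_zero.mpr (hcne n))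
  have hmono : ∀ n m, n < m → d m < d n / 4 := by
    intro n m h
    induction m, h using Nat.le_induction with
    | base => exact hcdec n
    | succ m hm ih =>
      have h1 := hcdec m
      have h2 := hd0 n
      simp only [hd] at *
      linarith
  have hsep : ∀ n m, n < m → d n / 4 + d m / 4 < |c n - c m| := by
    intro n m h
    have h1 := hmono n m h
    have h2 := hd0 n
    have h3 := hd0 m
    have tri : d n - d m ≤ |c n - c m| := by
      have := abs_sub_abs_le_abs_sub (c n - L) (c m - L)
      simp only [hd]
      have heq : c n - L - (c m - L) = c n - c m := by ring
      rw [heq] at this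
      exact this
    linarith
  refine ⟨c, fun n => d n / 4, hcS, fun n => by have := hd0 n; linarith, ?_⟩
  intro n m hnm
  rcases hnm.lt_or_gt with h | h
  · exact hsep n m h
  · have := hsep m n h
    rw [abs_sub_comm]
    linarith

/-- Bump functions adapted to a separated family of centers. -/
lemma aux_bumps (c ρ : ℕ → ℝ) (hρ : ∀ n, 0 < ρ n)
    (hsep : ∀ n m, n ≠ m → ρ n + ρ m < |c n - c m|) :
    ∃ g g' : ℕ → ℝ → ℝ,
      (∀ n, Continuous (g n)) ∧ (∀ n, Continuous (g' n)) ∧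
      (∀ n t, 0 ≤ g n t) ∧ (∀ n t, g n t ≤ 1) ∧ (∀ n t, 0 ≤ g' n t) ∧
      (∀ n, g' n (c n) = 1) ∧
      (∀ n t, g' n t * (1 - g n t) = 0) ∧
      (∀ n m t, n ≠ m → g n t * g m t = 0) := by
  refine ⟨fun n t => max 0 (min 1 (2 - 2 * |t - c n| / ρ n)),
    fun n t => max 0 (1 - 2 * |t - c n| / ρ n), ?_, ?_, ?_, ?_, ?_, ?_, ?_, ?_⟩
  · intro n
    fun_prop
  · intro n
    fun_prop
  · intro n t
    exact le_max_left _ _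
  · intro n t
    exact max_le zero_le_one (min_le_left _ _)
  · intro n t
    exact le_max_left _ _
  · intro n
    simp
  · intro n t
    simp only []
    by_cases h : max 0 (1 - 2 * |t - c n| / ρ n) = 0
    · rw [h, zero_mul]
    · have hlt : |t - c n| < ρ n / 2 := by
        by_contra hge
        push_neg at hge
        apply h
        rw [max_eq_left]
        have : (1:ℝ) ≤ 2 * |t - c n| / ρ n := by
          rw [le_div_iff₀ (hρ n)]
          linarith
        linarith
      have hone : min 1 (2 - 2 * |t - c n| / ρ n) = 1 := by
        rw [min_eq_left]
        have : 2 * |t - c n| / ρ n ≤ 1 := by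
          rw [div_le_one (hρ n)]
          linarith
        linarith
      rw [hone]
      norm_num
  · intro n m t hnm
    simp only []
    by_cases h1 : max 0 (min 1 (2 - 2 * |t - c n| / ρ n)) = 0
    · rw [h1, zero_mul]
    by_cases h2 : max 0 (min 1 (2 - 2 * |t - c m| / ρ m)) = 0
    · rw [h2, mul_zero]
    exfalso
    have hn : |t - c n| < ρ n := by
      by_contra hge
      push_neg at hge
      apply h1
      rw [max_eq_left]
      refine (min_le_right _ _).trans ?_
      have : (2:ℝ) ≤ 2 * |t - c n| / ρ n := by
        rw [le_div_iff₀ (hρ n)]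
        linarith
      linarith
    have hm : |t - c m| < ρ m := by
      by_contra hge
      push_neg at hge
      apply h2
      rw [max_eq_left]
      refine (min_le_right _ _).trans ?_
      have : (2:ℝ) ≤ 2 * |t - c m| / ρ m := by
        rw [le_div_iff₀ (hρ m)]
        linarith
      linarith
    have htri : |c n - c m| ≤ |t - c n| + |t - c m| :=
      calc |c n - c m| = |(c n - t) - (c m - t)| := by ring_nf
        _ ≤ |c n - t| + |c m - t| := abs_sub _ _
        _ = |t - c n| + |t - c m| := by rw [abs_sub_comm (c n) t, abs_sub_comm (c m) t]
    have := hsep n m hnm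
    linarith

/-- The interior of a union of two closed sets with empty interior is empty. -/
lemma aux_interior_union_empty {X : Type*} [TopologicalSpace X] {s t : Set X}
    (hs : IsClosed s) (hsi : interior s = ∅) (hti : interior t = ∅) :
    interior (s ∪ t) = ∅ := by
  have h1 : interior (s ∪ t) ∩ sᶜ ⊆ interior t := by
    apply interior_maximal
    · intro z hz
      rcases interior_subset hz.1 with h | h
      · exact absurd h hz.2
      · exact h
    · exact isOpen_interior.inter hs.isOpen_compl
  rw [hti] at h1
  have h2 : interior (s ∪ t) ⊆ s := by
    intro z hz
    by_contra hzs
    exact h1 ⟨hz, hzs⟩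
  have h3 : interior (s ∪ t) ⊆ interior s := interior_maximal h2 isOpen_interior
  rw [hsi] at h3
  exact Set.subset_empty_iff.mp h3

/-- The interior of a finite union of closed sets with empty interior is empty. -/
lemma aux_interior_biUnion_empty {X : Type*} [TopologicalSpace X] {ι : Type*} (F : Finset ι)
    (s : ι → Set X) (hcl : ∀ i, IsClosed (s i)) (hint : ∀ i, interior (s i) = ∅) :
    interior (⋃ i ∈ F, s i) = ∅ := by
  classical
  induction F using Finset.induction_on with
  | empty => simp
  | @insert a F ha ih =>
    rw [Finset.set_biUnion_insert]
    exact aux_interior_union_empty (hcl a) (hint a) ih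

end AuxLemmas

/-- the positive multiplication operator `M_φ` on `C(Ω)` (`Ω` compact
Hausdorff, `0 ≤ φ`) is compact-friendly iff `φ` is constant on a non-empty open set. -/
theorem compactFriendly_multiplication_CΩ_iff_flat
    {Ω : Type*} [TopologicalSpace Ω] [CompactSpace Ω] [T2Space Ω]
    (φ : C(Ω, ℝ)) (hφ : 0 ≤ φ)
    (Mφ : C(Ω, ℝ) →L[ℝ] C(Ω, ℝ)) (hMφ : ∀ f : C(Ω, ℝ), Mφ f = φ * f) :
    CompactFriendly Mφ ↔
      ∃ V : Set Ω, IsOpen V ∧ V.Nonempty ∧ ∃ c : ℝ, ∀ ω ∈ V, φ ω = c := by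
  constructor
  · -- hard direction
    rintro ⟨R, K, A, hR0, hK0, hA0, hRpos, hKpos, hKcomp, hcomm, hAR, hAK⟩
    by_contra hflat
    push_neg at hflat
    have hRMφ : ∀ f, R (φ * f) = φ * R f := by
      intro f
      have h := ContinuousLinearMap.ext_iff.mp hcomm f
      simp only [ContinuousLinearMap.comp_apply, hMφ] at h
      exact h
    obtain ⟨x, hx⟩ : ∃ x, A x ≠ 0 := by
      by_contra h
      push_neg at h
      exact hA0 (ContinuousLinearMap.ext fun x => by simp [h x])
    set δ := ‖A x‖ with hδdef
    have hδ : 0 < δ := norm_pos_iff.mpr hx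
    set U : Set Ω := {ω | δ / 2 < |(A x) ω|} with hU
    have hUopen : IsOpen U := isOpen_lt continuous_const ((A x).continuous.abs)
    have hUne : U.Nonempty := by
      by_contra h
      rw [Set.not_nonempty_iff_eq_empty] at h
      have hall : ∀ ω, |(A x) ω| ≤ δ / 2 := by
        intro ω
        by_contra hω
        push_neg at hω
        have hmem : ω ∈ U := hω
        rw [h] at hmem
        exact hmem
      have hle : ‖A x‖ ≤ δ / 2 :=
        (ContinuousMap.norm_le _ (by positivity)).mpr
          (fun ω => by rw [Real.norm_eq_abs]; exact hall ω)
      rw [← hδdef] at hle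
      linarith
    have hlevel : ∀ c : ℝ, interior (φ ⁻¹' {c}) = ∅ := by
      intro c
      by_contra h
      obtain ⟨ω, hω⟩ := Set.nonempty_iff_ne_empty.mpr h
      obtain ⟨ω', hω', hne⟩ := hflat _ isOpen_interior ⟨ω, hω⟩ c
      exact hne (by simpa using interior_subset hω')
    have hinf : (φ '' U).Infinite := by
      by_contra h
      rw [Set.not_infinite] at h
      have hsub : U ⊆ ⋃ c ∈ h.toFinset, φ ⁻¹' {c} := by
        intro ω hω
        simp only [Set.mem_iUnion, Set.mem_preimage, Set.mem_singleton_iff]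
        exact ⟨φ ω, by rw [Set.Finite.mem_toFinset]; exact ⟨ω, hω, rfl⟩, rfl⟩
      have hint := aux_interior_biUnion_empty h.toFinset (fun c => φ ⁻¹' {c})
        (fun c => isClosed_singleton.preimage φ.continuous) (fun c => hlevel c)
      obtain ⟨ω, hω⟩ := hUne
      have hin : ω ∈ interior (⋃ c ∈ h.toFinset, φ ⁻¹' {c}) :=
        interior_maximal hsub hUopen hω
      rw [hint] at hin
      exact hin
    obtain ⟨c, ρ, hcS, hρ, hsep⟩ := aux_separated_centers hinf
      (isCompact_univ.image φ.continuous) (Set.image_mono (Set.subset_univ U))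
    obtain ⟨g, g', hgc, hg'c, hg0, hg1, hg'0, hg'one, hgg', hdisjg⟩ := aux_bumps c ρ hρ hsep
    have hmemc : ∀ n, ∃ a, a ∈ U ∧ φ a = c n := fun n => hcS n
    choose ω hωU hωφ using hmemc
    set ψ : ℕ → C(Ω, ℝ) := fun n => (ContinuousMap.mk (g n) (hgc n)).comp φ with hψ
    have loc : ∀ (u : C(Ω, ℝ)) (ω' : Ω) (g0 : ℝ → ℝ) (hg0c : Continuous g0),
        (∀ s, 0 ≤ g0 s) → g0 (φ ω') = 1 → (∀ ω'', g0 (φ ω'') * u ω'' = 0) →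
        A u ω' = 0 := by
      intro u ω' g0 hg0c hnn h1 hvan
      have h2 : (ContinuousMap.mk g0 hg0c).comp φ * |u| = 0 := by
        ext ω''
        show g0 (φ ω'') * |u| ω'' = 0
        rw [ContinuousMap.abs_apply, ← abs_of_nonneg (hnn (φ ω'')), ← abs_mul,
          hvan, abs_zero]
      have h3 := aux_comm_cont φ R hRMφ g0 hg0c |u|
      rw [h2, map_zero] at h3
      have h4 : g0 (φ ω') * (R |u|) ω' = 0 := by
        have := congrArg (fun h => h ω') h3.symm
        simpa using this
      rw [h1, one_mul] at h4
      have h6 := ContinuousMap.le_def.mp (hAR u) ω'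
      rw [ContinuousMap.abs_apply, h4] at h6
      exact abs_eq_zero.mp (le_antisymm h6 (abs_nonneg _))
    have hAn : ∀ n, (A (ψ n * x)) (ω n) = (A x) (ω n) := by
      intro n
      have hv : ∀ ω'', g' n (φ ω'') * (x - ψ n * x) ω'' = 0 := by
        intro ω''
        have hval : (x - ψ n * x) ω'' = x ω'' - g n (φ ω'') * x ω'' := by
          simp [hψ]
        rw [hval]
        have hk := hgg' n (φ ω'')
        calc g' n (φ ω'') * (x ω'' - g n (φ ω'') * x ω'')
            = g' n (φ ω'') * (1 - g n (φ ω'')) * x ω'' := by ring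
          _ = 0 := by rw [hk, zero_mul]
      have h0 := loc (x - ψ n * x) (ω n) (g' n) (hg'c n) (hg'0 n)
        (by rw [hωφ n]; exact hg'one n) hv
      rw [map_sub] at h0
      rw [ContinuousMap.sub_apply] at h0
      linarith
    set y : ℕ → C(Ω, ℝ) := fun n => |ψ n * x| with hy
    have hyval : ∀ n ω'', y n ω'' = |g n (φ ω'') * x ω''| := by
      intro n ω''
      simp [hy, hψ, ContinuousMap.abs_apply]
    have h0y : ∀ n ω'', 0 ≤ y n ω'' := fun n ω'' => by rw [hyval]; exact abs_nonneg _
    have hley : ∀ n ω'', y n ω'' ≤ |x ω''| := by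
      intro n ω''
      rw [hyval, abs_mul]
      have h1 : |g n (φ ω'')| ≤ 1 := by
        rw [abs_of_nonneg (hg0 n _)]; exact hg1 n _
      nlinarith [abs_nonneg (x ω''), abs_nonneg (g n (φ ω''))]
    have hdisjy : ∀ n m, n ≠ m → ∀ ω'', y n ω'' * y m ω'' = 0 := by
      intro n m hnm ω''
      rw [hyval, hyval, ← abs_mul]
      have hz := hdisjg n m (φ ω'') hnm
      have : g n (φ ω'') * x ω'' * (g m (φ ω'') * x ω'') =
          g n (φ ω'') * g m (φ ω'') * (x ω'' * x ω'') := by ring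
      rw [this, hz, zero_mul, abs_zero]
    have hweak : ∀ μ : C(Ω, ℝ) →L[ℝ] ℝ, Tendsto (fun n => μ (y n)) atTop (𝓝 0) :=
      fun μ => aux_disjoint_weak_null x y h0y hley hdisjy μ
    have hbdy : ∀ n, ‖y n‖ ≤ ‖x‖ := by
      intro n
      rw [ContinuousMap.norm_le _ (norm_nonneg x)]
      intro ω''
      rw [Real.norm_eq_abs, abs_of_nonneg (h0y n ω'')]
      exact (hley n ω'').trans (by
        have := ContinuousMap.norm_coe_le_norm x ω''
        rwa [Real.norm_eq_abs] at this)
    have hKnull := aux_compact_null hKcomp y ‖x‖ hbdy hweak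
    have hKnorm : Tendsto (fun n => ‖K (y n)‖) atTop (𝓝 0) := by
      have := hKnull.norm
      rwa [norm_zero] at this
    have hlow : ∀ n, δ / 2 < ‖A (ψ n * x)‖ := by
      intro n
      have h1 : δ / 2 < |(A x) (ω n)| := hωU n
      rw [← hAn n] at h1
      refine h1.trans_le ?_
      have := ContinuousMap.norm_coe_le_norm (A (ψ n * x)) (ω n)
      rwa [Real.norm_eq_abs] at this
    have hup : ∀ n, ‖A (ψ n * x)‖ ≤ ‖K (y n)‖ := by
      intro n
      rw [ContinuousMap.norm_le _ (norm_nonneg _)]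
      intro ω''
      rw [Real.norm_eq_abs]
      have h1 := ContinuousMap.le_def.mp (hAK (ψ n * x)) ω''
      rw [ContinuousMap.abs_apply] at h1
      refine h1.trans ?_
      have h2 := ContinuousMap.norm_coe_le_norm (K (y n)) ω''
      rw [Real.norm_eq_abs] at h2
      exact (le_abs_self _).trans h2
    obtain ⟨n, hn⟩ := (hKnorm.eventually_lt_const (by positivity : (0:ℝ) < δ / 2)).exists
    have h1 := hlow n
    have h2 := hup n
    linarith
  · -- easy direction
    rintro ⟨V, hVopen, ⟨ω₀, hω₀⟩, c, hc⟩
    obtain ⟨g, hg0, hg1, hg01⟩ := exists_continuous_zero_one_of_isClosed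
      (isClosed_compl_iff.mpr hVopen) isClosed_singleton
      (Set.disjoint_singleton_right.mpr (by simpa using hω₀))
    have hgω₀ : g ω₀ = 1 := by
      have := hg1 rfl
      simpa using this
    have hgV : ∀ ω', ω' ∉ V → g ω' = 0 := by
      intro ω' h
      have := hg0 h
      simpa using this
    set A : C(Ω, ℝ) →L[ℝ] C(Ω, ℝ) := (ContinuousMap.evalCLM ℝ ω₀).smulRight g with hA
    have hAapp : ∀ (f : C(Ω, ℝ)) (ω' : Ω), (A f) ω' = f ω₀ * g ω' := by
      intro f ω'
      rfl
    have hAne : A ≠ 0 := by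
      intro h
      have := congrArg (fun T : C(Ω, ℝ) →L[ℝ] C(Ω, ℝ) => (T g) ω₀) h
      simp only [hAapp, ContinuousLinearMap.zero_apply, ContinuousMap.zero_apply] at this
      rw [hgω₀] at this
      norm_num at this
    have hApos : ∀ f : C(Ω, ℝ), 0 ≤ f → 0 ≤ A f := by
      intro f hf
      rw [ContinuousMap.le_def]
      intro ω'
      rw [ContinuousMap.zero_apply, hAapp]
      have h1 : (0:ℝ) ≤ f ω₀ := by
        have := ContinuousMap.le_def.mp hf ω₀
        simpa using this
      exact mul_nonneg h1 (hg01 ω').1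
    have hAcomp : IsCompactOperator (A : C(Ω, ℝ) →L[ℝ] C(Ω, ℝ)) := by
      refine ⟨(fun t : ℝ => t • g) '' Set.Icc (-1) 1,
        isCompact_Icc.image (continuous_id.smul continuous_const), ?_⟩
      refine Filter.mem_of_superset (Metric.ball_mem_nhds 0 one_pos) ?_
      intro f hf
      simp only [Set.mem_preimage]
      refine ⟨f ω₀, ?_, rfl⟩
      rw [Metric.mem_ball, dist_zero_right] at hf
      have h1 : |f ω₀| ≤ ‖f‖ := by
        have := ContinuousMap.norm_coe_le_norm f ω₀
        rwa [Real.norm_eq_abs] at this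
      have h2 : |f ω₀| ≤ 1 := h1.trans hf.le
      rw [Set.mem_Icc]
      constructor <;> [linarith [neg_abs_le (f ω₀)]; linarith [le_abs_self (f ω₀)]]
    have hAcomm : A.comp Mφ = Mφ.comp A := by
      apply ContinuousLinearMap.ext
      intro f
      ext ω'
      simp only [ContinuousLinearMap.comp_apply, hMφ, hAapp, ContinuousMap.mul_apply]
      by_cases hV : ω' ∈ V
      · rw [hc ω' hV, hc ω₀ hω₀]
        ring
      · rw [hgV ω' hV]
        ring
    have hdom : ∀ f : C(Ω, ℝ), |A f| ≤ A |f| := by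
      intro f
      rw [ContinuousMap.le_def]
      intro ω'
      rw [ContinuousMap.abs_apply, hAapp, hAapp, ContinuousMap.abs_apply, abs_mul,
        abs_of_nonneg (hg01 ω').1]
    exact ⟨A, A, A, hAne, hAne, hAne, hApos, hApos, hAcomp, hAcomm, hdom, hdom⟩
end

section
/- Define R : L_∞([0,1]²) → L_∞([0,1]²) by (Rf)(x,y) = ∫₀¹ f(t,y) dt, and let φ(x,y) = y. Then R is a positive bounded operator commuting with the multiplication operator M_φ, the multiplier φ has no flat (every level set φ⁻¹({γ}) is Lebesgue-null in [0,1]²), and R is not disjointness preserving: there exist f, g ∈ L_∞([0,1]²) with |f| ∧ |g| = 0 but |Rf| ∧ |Rg| ≠ 0. -/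
open MeasureTheory ENNReal

noncomputable section AvgProof

namespace AvgProof

abbrev nu : Measure ℝ := volume.restrict (Set.Icc (0:ℝ) 1)
abbrev muP : Measure (ℝ × ℝ) := nu.prod nu

instance : IsProbabilityMeasure nu := ⟨by simp [Real.volume_Icc]⟩

lemma ae_snd' {p : ℝ → Prop} (h : ∀ᵐ y ∂nu, p y) : ∀ᵐ q ∂muP, p q.2 :=
  Measure.quasiMeasurePreserving_snd.ae h

lemma ae_sections {p : ℝ × ℝ → Prop} (h : ∀ᵐ q ∂muP, p q) :
    ∀ᵐ y ∂nu, ∀ᵐ t ∂nu, p (t, y) := by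
  have h2 : ∀ᵐ q ∂muP, p q.swap :=
    Measure.measurePreserving_swap.quasiMeasurePreserving.ae h
  exact Measure.ae_ae_of_ae_prod h2

lemma ae_bound (f : Lp ℝ ∞ muP) : ∀ᵐ q ∂muP, ‖(f : ℝ × ℝ → ℝ) q‖ ≤ ‖f‖ := by
  filter_upwards [enorm_ae_le_eLpNormEssSup (f : ℝ × ℝ → ℝ) muP] with q hq
  have h1 : (‖(f : ℝ × ℝ → ℝ) q‖₊ : ℝ≥0∞) ≤ eLpNorm (f : ℝ × ℝ → ℝ) ∞ muP := by
    rwa [eLpNorm_exponent_top]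
  have := ENNReal.toReal_mono (Lp.eLpNorm_ne_top f) h1
  simpa [Lp.norm_def] using this

/-- The averaging of a plain function in its first variable. -/
def T (f : ℝ × ℝ → ℝ) : ℝ × ℝ → ℝ := fun q => ∫ t, f (t, q.2) ∂nu

lemma T_congr {f g : ℝ × ℝ → ℝ} (h : f =ᵐ[muP] g) : T f =ᵐ[muP] T g := by
  have h1 : ∀ᵐ y ∂nu, (∫ t, f (t, y) ∂nu) = ∫ t, g (t, y) ∂nu := by
    filter_upwards [ae_sections h] with y hy using integral_congr_ae hy
  exact ae_snd' h1

lemma section_meas (f : Lp ℝ ∞ muP) :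
    ∀ᵐ y ∂nu, AEStronglyMeasurable (fun t => (f : ℝ × ℝ → ℝ) (t, y)) nu :=
  (Lp.aestronglyMeasurable f).prod_swap.prodMk_left

lemma section_props (f : Lp ℝ ∞ muP) :
    ∀ᵐ y ∂nu, Integrable (fun t => (f : ℝ × ℝ → ℝ) (t, y)) nu ∧
      ‖∫ t, (f : ℝ × ℝ → ℝ) (t, y) ∂nu‖ ≤ ‖f‖ := by
  filter_upwards [ae_sections (ae_bound f), section_meas f] with y hby hmy
  have hint : Integrable (fun t => (f : ℝ × ℝ → ℝ) (t, y)) nu :=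
    (memLp_top_of_bound hmy ‖f‖ hby).integrable le_top
  refine ⟨hint, ?_⟩
  have := norm_integral_le_of_norm_le_const (μ := nu) hby
  simpa using this

lemma memT (f : Lp ℝ ∞ muP) : MemLp (T (f : ℝ × ℝ → ℝ)) ∞ muP := by
  have hsm := Lp.aestronglyMeasurable f
  have hmeas : AEStronglyMeasurable (T (f : ℝ × ℝ → ℝ)) muP := by
    have h1 : StronglyMeasurable fun y => ∫ t, hsm.mk _ (t, y) ∂nu :=
      hsm.stronglyMeasurable_mk.integral_prod_left'
    exact ⟨fun q => ∫ t, hsm.mk _ (t, q.2) ∂nu, h1.comp_measurable measurable_snd,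
      T_congr hsm.ae_eq_mk⟩
  have hb : ∀ᵐ q ∂muP, ‖T (f : ℝ × ℝ → ℝ) q‖ ≤ ‖f‖ :=
    ae_snd' ((section_props f).mono fun y hy => hy.2)
  exact memLp_top_of_bound hmeas ‖f‖ hb

lemma T_add (f g : Lp ℝ ∞ muP) :
    T ((f + g : Lp ℝ ∞ muP) : ℝ × ℝ → ℝ) =ᵐ[muP]
      T (f : ℝ × ℝ → ℝ) + T (g : ℝ × ℝ → ℝ) := by
  refine (T_congr (Lp.coeFn_add f g)).trans ?_
  have h1 : ∀ᵐ y ∂nu,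
      (∫ t, ((f : ℝ × ℝ → ℝ) + (g : ℝ × ℝ → ℝ)) (t, y) ∂nu) =
        (∫ t, (f : ℝ × ℝ → ℝ) (t, y) ∂nu) + ∫ t, (g : ℝ × ℝ → ℝ) (t, y) ∂nu := by
    filter_upwards [section_props f, section_props g] with y hf hg
    simpa only [Pi.add_apply] using integral_add hf.1 hg.1
  exact ae_snd' h1

lemma T_smul (c : ℝ) (f : Lp ℝ ∞ muP) :
    T ((c • f : Lp ℝ ∞ muP) : ℝ × ℝ → ℝ) =ᵐ[muP] c • T (f : ℝ × ℝ → ℝ) := by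
  refine (T_congr (Lp.coeFn_smul c f)).trans ?_
  apply Filter.Eventually.of_forall
  intro q
  simpa only [T, Pi.smul_apply] using integral_smul c (fun t => (f : ℝ × ℝ → ℝ) (t, q.2))

def Rlin : Lp ℝ ∞ muP →ₗ[ℝ] Lp ℝ ∞ muP where
  toFun f := (memT f).toLp _
  map_add' f g := by
    rw [← MemLp.toLp_add (memT f) (memT g)]
    exact MemLp.toLp_congr _ _ (T_add f g)
  map_smul' c f := by
    simp only [RingHom.id_apply]
    rw [MemLp.toLp_congr (memT (c • f)) (MemLp.const_smul (memT f) c) (T_smul c f)]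
    exact MemLp.toLp_const_smul c (memT f)

lemma Rlin_coe (f : Lp ℝ ∞ muP) :
    (Rlin f : ℝ × ℝ → ℝ) =ᵐ[muP] T (f : ℝ × ℝ → ℝ) :=
  MemLp.coeFn_toLp (memT f)

def Rop : Lp ℝ ∞ muP →L[ℝ] Lp ℝ ∞ muP :=
  LinearMap.mkContinuous Rlin 1 (by
    intro f
    rw [one_mul]
    have hb : ∀ᵐ q ∂muP, ‖(Rlin f : ℝ × ℝ → ℝ) q‖ ≤ ‖f‖ := by
      filter_upwards [Rlin_coe f,
        ae_snd' ((section_props f).mono fun y hy => hy.2)] with q h1 h2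
      rw [h1]; exact h2
    have := Lp.norm_le_of_ae_bound (norm_nonneg f) hb
    simpa [measureUnivNNReal, measure_univ] using this)

lemma Rop_coe (f : Lp ℝ ∞ muP) :
    (Rop f : ℝ × ℝ → ℝ) =ᵐ[muP] T (f : ℝ × ℝ → ℝ) :=
  Rlin_coe f

def s1 : Set (ℝ × ℝ) := {q | q.1 ≤ 1/2}
def s2 : Set (ℝ × ℝ) := {q | 1/2 < q.1}
def f0 : ℝ × ℝ → ℝ := s1.indicator fun _ => 1
def g0 : ℝ × ℝ → ℝ := s2.indicator fun _ => 1

lemma hm1 : MeasurableSet s1 := measurableSet_le measurable_fst measurable_const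
lemma hm2 : MeasurableSet s2 := measurableSet_lt measurable_const measurable_fst

lemma memf0 : MemLp f0 ∞ muP :=
  memLp_top_of_bound (stronglyMeasurable_const.indicator hm1).aestronglyMeasurable 1
    (Filter.Eventually.of_forall fun q => by
      by_cases h : q ∈ s1 <;> simp [f0, Set.indicator_apply, h])

lemma memg0 : MemLp g0 ∞ muP :=
  memLp_top_of_bound (stronglyMeasurable_const.indicator hm2).aestronglyMeasurable 1
    (Filter.Eventually.of_forall fun q => by
      by_cases h : q ∈ s2 <;> simp [g0, Set.indicator_apply, h])

lemma nu_Iic : nu (Set.Iic ((1:ℝ)/2)) = ENNReal.ofReal (1/2) := by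
  rw [Measure.restrict_apply measurableSet_Iic]
  have h : Set.Iic ((1:ℝ)/2) ∩ Set.Icc (0:ℝ) 1 = Set.Icc (0:ℝ) (1/2) := by
    ext x
    simp only [Set.mem_inter_iff, Set.mem_Iic, Set.mem_Icc]
    constructor
    · rintro ⟨a, b, _⟩; exact ⟨b, a⟩
    · rintro ⟨a, b⟩; exact ⟨b, a, by linarith⟩
  rw [h, Real.volume_Icc]; norm_num

lemma nu_Ioi : nu (Set.Ioi ((1:ℝ)/2)) = ENNReal.ofReal (1/2) := by
  rw [Measure.restrict_apply measurableSet_Ioi]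
  have h : Set.Ioi ((1:ℝ)/2) ∩ Set.Icc (0:ℝ) 1 = Set.Ioc ((1:ℝ)/2) 1 := by
    ext x
    simp only [Set.mem_inter_iff, Set.mem_Ioi, Set.mem_Icc, Set.mem_Ioc]
    constructor
    · rintro ⟨a, _, c⟩; exact ⟨a, c⟩
    · rintro ⟨a, b⟩; exact ⟨a, by linarith, b⟩
  rw [h, Real.volume_Ioc]; norm_num

lemma Tf0 : T f0 = fun _ => (1:ℝ)/2 := by
  funext q
  have h : (fun t => f0 (t, q.2)) = (Set.Iic ((1:ℝ)/2)).indicator fun _ => (1:ℝ) := by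
    funext t; by_cases h : t ≤ 1/2 <;> simp [f0, s1, Set.indicator_apply, h]
  show (∫ t, f0 (t, q.2) ∂nu) = 1/2
  rw [h, integral_indicator_const _ measurableSet_Iic, measureReal_def, nu_Iic]
  simp [ENNReal.toReal_ofReal]

lemma Tg0 : T g0 = fun _ => (1:ℝ)/2 := by
  funext q
  have h : (fun t => g0 (t, q.2)) = (Set.Ioi ((1:ℝ)/2)).indicator fun _ => (1:ℝ) := by
    funext t; by_cases h : (1:ℝ)/2 < t <;> simp [g0, s2, Set.indicator_apply, h]
  show (∫ t, g0 (t, q.2) ∂nu) = 1/2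
  rw [h, integral_indicator_const _ measurableSet_Ioi, measureReal_def, nu_Ioi]
  simp [ENNReal.toReal_ofReal]

end AvgProof

end AvgProof

open AvgProof

/-- on `L_∞([0,1]²)` the averaging operator `(Rf)(x,y) = ∫₀¹ f(t,y) dt` is
positive, bounded, commutes with `M_φ` for `φ(x,y) = y`, the multiplier `φ` has no flat
(every level set is null), yet `R` is not disjointness preserving. -/
theorem averaging_operator_not_disjointness_preserving :
    ∀ μ : Measure (ℝ × ℝ), μ =
        ((volume.restrict (Set.Icc (0:ℝ) 1)).prod (volume.restrict (Set.Icc (0:ℝ) 1))) →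
    ∃ R : Lp ℝ ∞ μ →L[ℝ] Lp ℝ ∞ μ,
      (∀ f : Lp ℝ ∞ μ, (R f : ℝ × ℝ → ℝ) =ᵐ[μ]
        fun q => ∫ t in Set.Icc (0:ℝ) 1, (f : ℝ × ℝ → ℝ) (t, q.2)) ∧
      (∀ f : Lp ℝ ∞ μ, 0 ≤ f → 0 ≤ R f) ∧
      (∀ Mφ : Lp ℝ ∞ μ →L[ℝ] Lp ℝ ∞ μ,
        (∀ f : Lp ℝ ∞ μ, (Mφ f : ℝ × ℝ → ℝ) =ᵐ[μ] fun q => q.2 * (f : ℝ × ℝ → ℝ) q) →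
        R.comp Mφ = Mφ.comp R) ∧
      (∀ γ : ℝ, μ {q : ℝ × ℝ | q.2 = γ} = 0) ∧
      (∃ f g : Lp ℝ ∞ μ, |f| ⊓ |g| = 0 ∧ |R f| ⊓ |R g| ≠ 0) := by
  intro μ hμ
  subst hμ
  refine ⟨Rop, ?_, ?_, ?_, ?_, ?_⟩
  · -- explicit formula
    exact fun f => Rop_coe f
  · -- positivity
    intro f hf
    rw [← Lp.coeFn_nonneg]
    have hf' : (0 : ℝ × ℝ → ℝ) ≤ᵐ[muP] (f : ℝ × ℝ → ℝ) := (Lp.coeFn_nonneg f).mpr hf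
    have hsec : ∀ᵐ y ∂nu, 0 ≤ ∫ t, (f : ℝ × ℝ → ℝ) (t, y) ∂nu := by
      filter_upwards [ae_sections (p := fun q => 0 ≤ (f : ℝ × ℝ → ℝ) q) hf'] with y hy
      exact integral_nonneg_of_ae hy
    filter_upwards [Rop_coe f, ae_snd' hsec] with q h1 h2
    simp only [Pi.zero_apply]
    rw [h1]
    exact h2
  · -- commutation with multiplication by the second coordinate
    intro Mφ hMφ
    refine ContinuousLinearMap.ext fun f => Lp.ext ?_
    simp only [ContinuousLinearMap.comp_apply]
    have h1 : ((Rop (Mφ f)) : ℝ × ℝ → ℝ) =ᵐ[muP]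
        fun q => q.2 * T (f : ℝ × ℝ → ℝ) q := by
      refine (Rop_coe (Mφ f)).trans ((T_congr (hMφ f)).trans ?_)
      apply Filter.Eventually.of_forall
      intro q
      exact integral_const_mul q.2 (fun t => (f : ℝ × ℝ → ℝ) (t, q.2))
    have h2 : ((Mφ (Rop f)) : ℝ × ℝ → ℝ) =ᵐ[muP]
        fun q => q.2 * T (f : ℝ × ℝ → ℝ) q := by
      refine (hMφ (Rop f)).trans ?_
      filter_upwards [Rop_coe f] with q hq
      rw [hq]
    exact h1.trans h2.symm
  · -- level sets of the multiplier are null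
    intro γ
    have hset : {q : ℝ × ℝ | q.2 = γ} = Set.univ ×ˢ ({γ} : Set ℝ) := by
      ext q; rw [Set.mem_prod]; simp
    rw [hset, Measure.prod_prod]
    have h0 : nu ({γ} : Set ℝ) = 0 := by
      rw [Measure.restrict_apply (measurableSet_singleton γ)]
      exact measure_mono_null Set.inter_subset_left Real.volume_singleton
    rw [h0, mul_zero]
  · -- not disjointness preserving
    refine ⟨memf0.toLp _, memg0.toLp _, ?_, ?_⟩
    · apply Lp.ext
      refine Filter.EventuallyEq.trans ?_ (Lp.coeFn_zero ℝ ∞ muP).symm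
      filter_upwards [Lp.coeFn_inf |memf0.toLp _| |memg0.toLp _|,
        Lp.coeFn_abs (memf0.toLp f0), Lp.coeFn_abs (memg0.toLp g0),
        memf0.coeFn_toLp, memg0.coeFn_toLp] with q h1 h2 h3 h4 h5
      rw [h1]
      simp only [Pi.inf_apply, Pi.zero_apply]
      rw [h2, h3, h4, h5]
      simp only [f0, g0, s1, s2, Set.indicator_apply, Set.mem_setOf_eq]
      by_cases h : q.1 ≤ 1/2
      · rw [if_pos h, if_neg (not_lt.mpr h)]
        simp
      · rw [if_neg h, if_pos (lt_of_not_ge h)]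
        simp
    · intro hcontra
      have h0 : (|Rop (memf0.toLp f0)| ⊓ |Rop (memg0.toLp g0)| : Lp ℝ ∞ muP)
          =ᵐ[muP] (0 : ℝ × ℝ → ℝ) := by
        rw [hcontra]; exact Lp.coeFn_zero ℝ ∞ muP
      have hRf : (Rop (memf0.toLp f0) : ℝ × ℝ → ℝ) =ᵐ[muP] fun _ => (1:ℝ)/2 := by
        refine (Rop_coe _).trans ?_
        refine (T_congr memf0.coeFn_toLp).trans ?_
        rw [Tf0]
      have hRg : (Rop (memg0.toLp g0) : ℝ × ℝ → ℝ) =ᵐ[muP] fun _ => (1:ℝ)/2 := by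
        refine (Rop_coe _).trans ?_
        refine (T_congr memg0.coeFn_toLp).trans ?_
        rw [Tg0]
      have hne : muP ≠ 0 := by
        intro h
        have h1 := measure_univ (μ := muP)
        rw [h] at h1
        simp at h1
      haveI : (ae muP).NeBot := ae_neBot.mpr hne
      obtain ⟨q, e0, e1, e2, e3, e4, e5⟩ :=
        (h0.and ((Lp.coeFn_inf (|Rop (memf0.toLp f0)|) (|Rop (memg0.toLp g0)|)).and
          ((Lp.coeFn_abs (Rop (memf0.toLp f0))).and
            ((Lp.coeFn_abs (Rop (memg0.toLp g0))).and (hRf.and hRg))))).exists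
      rw [e1] at e0
      simp only [Pi.inf_apply, Pi.zero_apply] at e0
      rw [e2, e3] at e0
      simp only [e4, e5] at e0
      norm_num [inf_idem] at e0
end
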